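/- arXiv:2207.14113 — 6 statements merged into one kernel-verified Lean document; each statement's English description precedes it below -/
import Mathlib

section
/- Let q be a prime power and let n be an odd prime. The Galois group of the polynomial x^{q^n} + t·x over the rational function field F_q(t) (equivalently, of x^{q^n - 1} + t) is isomorphic to ΓL(1, q^n), i.e., to the semidirect product of the unit group (F_{q^n})^× by the Galois group Gal(F_{q^n}/F_q) (a cyclic group of order n generated by the q-power Frobenius), acting naturally; in particular it has order n(q^n − 1). -/
open scoped Polynomial

/-- The natural action of the relative automorphism group `Gal(E/F_q)` on the
unit group `Eˣ`, used to form the semidirect product `ΓL(1, qⁿ) = Eˣ ⋊ Gal(E/F_q)`. -/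
def galOnUnits (Fq E : Type*) [Field Fq] [Field E] [Algebra Fq E] :
    (E ≃ₐ[Fq] E) →* MulAut Eˣ where
  toFun σ := Units.mapEquiv σ.toRingEquiv.toMulEquiv
  map_one' := by ext u; rfl
  map_mul' σ τ := by ext u; rfl

namespace GammaLAux

open Polynomial

noncomputable section

/-- An evaluation homomorphism at a nonconstant polynomial, with coefficients mapped by a field
embedding, kills only the zero polynomial. -/
lemma eval₂_ne_zero {R S : Type*} [Field R] [Field S] (φ : R →+* S) (g : S[X])
    (hg : 0 < g.natDegree) {p : R[X]} (hp : p ≠ 0) : eval₂ (C.comp φ) g p ≠ 0 := by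
  intro h
  have h2 : (p.map φ).comp g = 0 := by
    rw [comp, eval₂_map]; exact h
  rcases comp_eq_zero_iff.mp h2 with h3 | ⟨_, h4⟩
  · exact hp ((Polynomial.map_eq_zero_iff φ.injective).mp h3)
  · rw [h4, natDegree_C] at hg; exact Nat.lt_irrefl 0 hg

lemma eval₂RingHom_injective {R S : Type*} [Field R] [Field S] (φ : R →+* S) (g : S[X])
    (hg : 0 < g.natDegree) :
    Function.Injective (eval₂RingHom (C.comp φ) g : R[X] →+* S[X]) := by
  intro p q h
  by_contra hne
  have hpq : p - q ≠ 0 := sub_ne_zero.mpr hne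
  have h0 : eval₂RingHom (C.comp φ) g (p - q) = 0 := by
    rw [map_sub, h, sub_self]
  exact eval₂_ne_zero φ g hg hpq (by rw [← coe_eval₂RingHom]; exact h0)

variable (Fq E : Type) [Field Fq] [Fintype Fq] [Field E] [Fintype E] [Algebra Fq E]

lemma m_pos : 0 < Fintype.card E - 1 := by
  have := Fintype.one_lt_card (α := E)
  omega

lemma card_eq_m_add_one : Fintype.card E = (Fintype.card E - 1) + 1 := by
  have := Fintype.one_lt_card (α := E)
  omega

/-- The substitution homomorphism `F_q[X] → E[X]`, `X ↦ -X^(#E - 1)`. -/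
def gam : Fq[X] →+* E[X] :=
  eval₂RingHom (C.comp (algebraMap Fq E)) (-(X ^ (Fintype.card E - 1)))

lemma gam_C (a : Fq) : gam Fq E (C a) = C (algebraMap Fq E a) := eval₂_C _ _

lemma gam_X : gam Fq E X = -(X ^ (Fintype.card E - 1)) := eval₂_X _ _

lemma gam_injective : Function.Injective (gam Fq E) :=
  eval₂RingHom_injective _ _ (by rw [natDegree_neg, natDegree_X_pow]; exact m_pos E)

/-- The base homomorphism `F_q[X] → F_q(t) := RatFunc F_q → RatFunc E`. -/
def beta : Fq[X] →+* RatFunc E := (algebraMap E[X] (RatFunc E)).comp (gam Fq E)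

lemma beta_injective : Function.Injective (beta Fq E) :=
  (IsFractionRing.injective E[X] (RatFunc E)).comp (gam_injective Fq E)

/-- The algebra structure on `E(s)` over `F_q(t)` given by `t ↦ -s^(#E - 1)`. -/
def algKL : Algebra (RatFunc Fq) (RatFunc E) :=
  (IsFractionRing.lift (beta_injective Fq E)).toAlgebra

attribute [local instance] algKL

lemma algKL_algebraMap (p : Fq[X]) :
    algebraMap (RatFunc Fq) (RatFunc E) (algebraMap Fq[X] (RatFunc Fq) p)
      = algebraMap E[X] (RatFunc E) (gam Fq E p) :=
  IsFractionRing.lift_algebraMap (beta_injective Fq E) p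

lemma algKL_X :
    algebraMap (RatFunc Fq) (RatFunc E) RatFunc.X
      = -(RatFunc.X ^ (Fintype.card E - 1)) := by
  rw [← RatFunc.algebraMap_X (K := Fq), algKL_algebraMap, gam_X, map_neg, map_pow,
    RatFunc.algebraMap_X]

lemma algKL_C (a : Fq) :
    algebraMap (RatFunc Fq) (RatFunc E) (RatFunc.C a)
      = algebraMap E (RatFunc E) (algebraMap Fq E a) := by
  rw [← RatFunc.algebraMap_C (K := Fq), algKL_algebraMap, gam_C, RatFunc.algebraMap_C,
    RatFunc.algebraMap_eq_C]

/-- The substitution homomorphism `E[X] → E[X]`, coefficients by `φ`, `X ↦ uX`. -/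
def theta (u : E) (φ : E →+* E) : E[X] →+* E[X] :=
  eval₂RingHom (C.comp φ) (C u * X)

lemma theta_C (u : E) (φ : E →+* E) (a : E) : theta E u φ (C a) = C (φ a) := eval₂_C _ _

lemma theta_X (u : E) (φ : E →+* E) : theta E u φ X = C u * X := eval₂_X _ _

lemma theta_theta (u₁ u₂ : E) (φ₁ φ₂ : E →+* E) (p : E[X]) :
    theta E u₁ φ₁ (theta E u₂ φ₂ p) = theta E (u₁ * φ₁ u₂) (φ₁.comp φ₂) p := by
  have h : (theta E u₁ φ₁).comp (theta E u₂ φ₂) = theta E (u₁ * φ₁ u₂) (φ₁.comp φ₂) := by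
    apply ringHom_ext
    · intro a
      simp [theta_C]
    · simp only [RingHom.comp_apply, theta_X, map_mul, theta_C, C_mul]
      ring
  exact DFunLike.congr_fun h p

lemma theta_one : theta E 1 (RingHom.id E) = RingHom.id E[X] := by
  apply ringHom_ext
  · intro a; simp [theta_C]
  · simp [theta_X]

lemma theta_injective (u : E) (hu : u ≠ 0) (φ : E →+* E) :
    Function.Injective (theta E u φ) :=
  eval₂RingHom_injective φ (C u * X) (by rw [natDegree_C_mul_X u hu]; norm_num)

/-- The induced homomorphism on `E(s)`. -/
def ThetaL (u : E) (hu : u ≠ 0) (φ : E →+* E) : RatFunc E →+* RatFunc E :=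
  IsFractionRing.lift (g := (algebraMap E[X] (RatFunc E)).comp (theta E u φ))
    ((IsFractionRing.injective E[X] (RatFunc E)).comp (theta_injective E u hu φ))

lemma ThetaL_algebraMap (u : E) (hu : u ≠ 0) (φ : E →+* E) (p : E[X]) :
    ThetaL E u hu φ (algebraMap E[X] (RatFunc E) p)
      = algebraMap E[X] (RatFunc E) (theta E u φ p) :=
  IsFractionRing.lift_algebraMap _ p

lemma ratFuncE_hom_ext {M : Type*} [CommRing M] {f g : RatFunc E →+* M}
    (h : ∀ p : E[X], f (algebraMap E[X] (RatFunc E) p) = g (algebraMap E[X] (RatFunc E) p)) :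
    f = g :=
  IsLocalization.ringHom_ext (nonZeroDivisors E[X]) (RingHom.ext h)

lemma A_C (a : E) :
    algebraMap E[X] (RatFunc E) (C a) = algebraMap E (RatFunc E) a := by
  rw [RatFunc.algebraMap_C, RatFunc.algebraMap_eq_C]

lemma A_X : algebraMap E[X] (RatFunc E) X = RatFunc.X := RatFunc.algebraMap_X

variable {E} in
lemma pow_card_A (e : E) :
    (algebraMap E (RatFunc E) e) ^ Fintype.card E = algebraMap E (RatFunc E) e := by
  rw [← map_pow, FiniteField.pow_card]

variable {Fq E} in
lemma theta_gam (u : E) (hu : u ^ (Fintype.card E - 1) = 1) (φ : E ≃ₐ[Fq] E) (p : Fq[X]) :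
    theta E u (φ : E →+* E) (gam Fq E p) = gam Fq E p := by
  have h : (theta E u (φ : E →+* E)).comp (gam Fq E) = gam Fq E := by
    apply ringHom_ext
    · intro a
      simp [gam_C, theta_C, AlgEquiv.commutes]
    · simp only [RingHom.comp_apply, gam_X, map_neg, map_pow, theta_X, mul_pow, ← C_pow, hu,
        C_1, one_mul]
  exact DFunLike.congr_fun h p

variable {E} in
lemma ThetaL_comp (u v : E) (hu : u ≠ 0) (hv : v ≠ 0) (ρ ψ : E →+* E)
    (h1 : ψ.comp ρ = RingHom.id E) (hvu : v * ψ u = 1) :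
    (ThetaL E v hv ψ).comp (ThetaL E u hu ρ) = RingHom.id (RatFunc E) := by
  apply ratFuncE_hom_ext
  intro p
  simp only [RingHom.comp_apply, RingHom.id_apply, ThetaL_algebraMap]
  rw [theta_theta, hvu, h1, theta_one, RingHom.id_apply]

variable {E} in
/-- A ring equivalence of `E(s)` from substitution data. -/
def ThetaEquiv (u v : E) (hu : u ≠ 0) (hv : v ≠ 0) (ρ ψ : E →+* E)
    (h1 : ψ.comp ρ = RingHom.id E) (h2 : ρ.comp ψ = RingHom.id E)
    (hvu : v * ψ u = 1) (huv : u * ρ v = 1) : RatFunc E ≃+* RatFunc E where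
  toFun := ThetaL E u hu ρ
  invFun := ThetaL E v hv ψ
  left_inv := fun x => by
    have h := DFunLike.congr_fun (ThetaL_comp u v hu hv ρ ψ h1 hvu) x
    simpa using h
  right_inv := fun x => by
    have h := DFunLike.congr_fun (ThetaL_comp v u hv hu ψ ρ h2 huv) x
    simpa using h
  map_mul' := map_mul _
  map_add' := map_add _

variable {Fq E} in
/-- The ring equivalence of `E(s)` attached to `(u, φ)`. -/
def FF0ring (u : Eˣ) (φ : E ≃ₐ[Fq] E) : RatFunc E ≃+* RatFunc E :=
  ThetaEquiv (u : E) ((φ.symm : E →+* E) ↑u⁻¹) u.ne_zero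
    ((_root_.map_ne_zero _).mpr u⁻¹.ne_zero) (φ : E →+* E) (φ.symm : E →+* E)
    (RingHom.ext fun x => φ.symm_apply_apply x)
    (RingHom.ext fun x => φ.apply_symm_apply x)
    (by rw [← map_mul]; show φ.symm (↑u⁻¹ * ↑u) = 1; simp)
    (by
      have h : (φ : E →+* E) ((φ.symm : E →+* E) ↑u⁻¹) = ↑u⁻¹ := φ.apply_symm_apply _
      rw [h]
      simp)

lemma FF0ring_apply {u : Eˣ} {φ : E ≃ₐ[Fq] E} (x : RatFunc E) :
    FF0ring u φ x = ThetaL E (u : E) u.ne_zero (φ : E →+* E) x := rfl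

variable {Fq E} in
/-- The algebra automorphism of `E(s)` over `F_q(t)` attached to `(u, φ)`. -/
def FF0 (u : Eˣ) (φ : E ≃ₐ[Fq] E) : RatFunc E ≃ₐ[RatFunc Fq] RatFunc E := by
  refine AlgEquiv.ofRingEquiv (f := FF0ring u φ) ?_
  intro x
  have h : ((FF0ring u φ : RatFunc E →+* RatFunc E)).comp
      (algebraMap (RatFunc Fq) (RatFunc E)) = algebraMap (RatFunc Fq) (RatFunc E) := by
    apply IsLocalization.ringHom_ext (nonZeroDivisors Fq[X])
    apply RingHom.ext
    intro p
    simp only [RingHom.comp_apply, algKL_algebraMap]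
    show ThetaL E (u : E) u.ne_zero (φ : E →+* E)
        (algebraMap E[X] (RatFunc E) (gam Fq E p)) = algebraMap E[X] (RatFunc E) (gam Fq E p)
    rw [ThetaL_algebraMap,
      theta_gam (u : E) (FiniteField.pow_card_sub_one_eq_one (u : E) u.ne_zero) φ]
  exact DFunLike.congr_fun h x

variable {Fq E} in
lemma FF0_algebraMap (u : Eˣ) (φ : E ≃ₐ[Fq] E) (p : E[X]) :
    FF0 u φ (algebraMap E[X] (RatFunc E) p)
      = algebraMap E[X] (RatFunc E) (theta E (u : E) (φ : E →+* E) p) := by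
  show ThetaL E (u : E) u.ne_zero (φ : E →+* E) (algebraMap E[X] (RatFunc E) p) = _
  rw [ThetaL_algebraMap]

variable {Fq E} in
lemma FF0_X (u : Eˣ) (φ : E ≃ₐ[Fq] E) :
    FF0 u φ RatFunc.X = algebraMap E (RatFunc E) (u : E) * RatFunc.X := by
  rw [← A_X E, FF0_algebraMap, theta_X, map_mul, A_C, A_X]

variable {Fq E} in
lemma FF0_A (u : Eˣ) (φ : E ≃ₐ[Fq] E) (e : E) :
    FF0 u φ (algebraMap E (RatFunc E) e) = algebraMap E (RatFunc E) (φ e) := by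
  rw [← A_C E, FF0_algebraMap, theta_C, A_C]
  rfl

variable {Fq E} in
lemma autKL_ext {σ τ : RatFunc E ≃ₐ[RatFunc Fq] RatFunc E}
    (h : ∀ p : E[X], σ (algebraMap E[X] (RatFunc E) p) = τ (algebraMap E[X] (RatFunc E) p)) :
    σ = τ := by
  have h2 : (σ : RatFunc E →+* RatFunc E) = (τ : RatFunc E →+* RatFunc E) :=
    ratFuncE_hom_ext E h
  exact AlgEquiv.ext fun x => DFunLike.congr_fun h2 x

/-- The map `Eˣ ⋊ Gal(E/F_q) → Aut(E(s)/F_q(t))` as a group homomorphism. -/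
def FF : (Eˣ ⋊[galOnUnits Fq E] (E ≃ₐ[Fq] E)) →* (RatFunc E ≃ₐ[RatFunc Fq] RatFunc E) where
  toFun g := FF0 g.left g.right
  map_one' := by
    apply autKL_ext
    intro p
    rw [FF0_algebraMap]
    show algebraMap E[X] (RatFunc E)
        (theta E ((1 : Eˣ) : E) (((1 : E ≃ₐ[Fq] E)) : E →+* E) p)
      = algebraMap E[X] (RatFunc E) p
    congr 1
    have h1 : ((1 : Eˣ) : E) = (1 : E) := rfl
    have h2 : (((1 : E ≃ₐ[Fq] E)) : E →+* E) = RingHom.id E := RingHom.ext fun x => rfl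
    rw [h1, h2, theta_one, RingHom.id_apply]
  map_mul' g₁ g₂ := by
    apply autKL_ext
    intro p
    show FF0 (g₁ * g₂).left (g₁ * g₂).right _
      = (FF0 g₁.left g₁.right * FF0 g₂.left g₂.right) _
    have hmul : ∀ x, (FF0 g₁.left g₁.right * FF0 g₂.left g₂.right) x
        = FF0 g₁.left g₁.right (FF0 g₂.left g₂.right x) := fun x => rfl
    rw [hmul, FF0_algebraMap, FF0_algebraMap, FF0_algebraMap, theta_theta]
    congr 1

lemma FF_injective : Function.Injective (FF Fq E) := by
  rw [injective_iff_map_eq_one]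
  intro g hg
  have hA : Function.Injective (algebraMap E (RatFunc E)) := (algebraMap E (RatFunc E)).injective
  have h1 : ∀ x, FF0 g.left g.right x = x := fun x => DFunLike.congr_fun hg x
  have hl : g.left = 1 := by
    have hs := h1 RatFunc.X
    rw [FF0_X] at hs
    have h2 : algebraMap E (RatFunc E) (g.left : E) = 1 :=
      mul_right_cancel₀ RatFunc.X_ne_zero (hs.trans (one_mul (RatFunc.X : RatFunc E)).symm)
    exact Units.ext (hA (by rw [h2, Units.val_one, map_one]))
  have hr : g.right = 1 := by
    apply AlgEquiv.ext
    intro e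
    have hs := h1 (algebraMap E (RatFunc E) e)
    rw [FF0_A] at hs
    exact hA hs
  have hgg : g = ⟨g.left, g.right⟩ := rfl
  rw [hgg, hl, hr]
  rfl

lemma pow_card_mem_range (x : RatFunc E) (hx : x ^ Fintype.card E = x) :
    ∃ e : E, algebraMap E (RatFunc E) e = x := by
  classical
  set P : (RatFunc E)[X] := X ^ Fintype.card E - X with hPdef
  have hP : P ≠ 0 := FiniteField.X_pow_card_sub_X_ne_zero _ Fintype.one_lt_card
  have hxr : x ∈ P.roots := by
    rw [mem_roots hP, hPdef, IsRoot.def, eval_sub, eval_pow, eval_X, hx, sub_self]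
  have hsub : (Finset.univ.image (algebraMap E (RatFunc E))) ⊆ P.roots.toFinset := by
    intro y hy
    obtain ⟨e, _, rfl⟩ := Finset.mem_image.mp hy
    rw [Multiset.mem_toFinset, mem_roots hP, hPdef, IsRoot.def, eval_sub, eval_pow, eval_X,
      pow_card_A, sub_self]
  have hcard : P.roots.toFinset.card ≤ Fintype.card E := by
    refine le_trans (Multiset.toFinset_card_le _) (le_trans (card_roots' P) ?_)
    rw [hPdef, FiniteField.X_pow_card_sub_X_natDegree_eq _ Fintype.one_lt_card]
  have himg : (Finset.univ.image (algebraMap E (RatFunc E))).card = Fintype.card E := by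
    rw [Finset.card_image_of_injective _ (algebraMap E (RatFunc E)).injective, Finset.card_univ]
  have heq : Finset.univ.image (algebraMap E (RatFunc E)) = P.roots.toFinset :=
    Finset.eq_of_subset_of_card_le hsub (by omega)
  have hx2 : x ∈ Finset.univ.image (algebraMap E (RatFunc E)) :=
    heq ▸ Multiset.mem_toFinset.mpr hxr
  obtain ⟨e, _, he⟩ := Finset.mem_image.mp hx2
  exact ⟨e, he⟩

lemma X_pow_card :
    (RatFunc.X : RatFunc E) ^ Fintype.card E
      = RatFunc.X ^ (Fintype.card E - 1) * RatFunc.X := by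
  conv_lhs => rw [card_eq_m_add_one E]
  rw [pow_succ]

lemma FF_surjective : Function.Surjective (FF Fq E) := by
  intro σ
  have hA : Function.Injective (algebraMap E (RatFunc E)) := (algebraMap E (RatFunc E)).injective
  have hs0 : (RatFunc.X : RatFunc E) ≠ 0 := RatFunc.X_ne_zero
  have hσs0 : σ RatFunc.X ≠ 0 := by
    intro h
    exact hs0 (σ.injective (by rw [h, map_zero]))
  have hfix : σ ((RatFunc.X : RatFunc E) ^ (Fintype.card E - 1))
      = RatFunc.X ^ (Fintype.card E - 1) := by
    have h := σ.commutes (RatFunc.X : RatFunc Fq)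
    rw [algKL_X, map_neg] at h
    exact neg_injective h
  have hkey : σ RatFunc.X ^ Fintype.card E
      = RatFunc.X ^ (Fintype.card E - 1) * σ RatFunc.X := by
    rw [← map_pow, X_pow_card, map_mul, hfix]
  set u0 : RatFunc E := σ RatFunc.X * RatFunc.X⁻¹ with hu0def
  have hu0 : u0 ^ Fintype.card E = u0 := by
    rw [hu0def, mul_pow, hkey, inv_pow, X_pow_card]
    field_simp
  obtain ⟨eu, heu⟩ := pow_card_mem_range E u0 hu0
  have heu0 : eu ≠ 0 := by
    rintro rfl
    rw [map_zero] at heu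
    exact (mul_ne_zero hσs0 (inv_ne_zero hs0)) heu.symm
  have hφ : ∀ e : E, ∃ e' : E,
      algebraMap E (RatFunc E) e' = σ (algebraMap E (RatFunc E) e) := by
    intro e
    refine pow_card_mem_range E _ ?_
    rw [← map_pow, pow_card_A]
  choose φ0 hφ0 using hφ
  have φmul : ∀ a b, φ0 (a * b) = φ0 a * φ0 b := fun a b =>
    hA (by rw [map_mul, hφ0, hφ0, hφ0, map_mul, map_mul])
  have φadd : ∀ a b, φ0 (a + b) = φ0 a + φ0 b := fun a b =>
    hA (by rw [map_add, hφ0, hφ0, hφ0, map_add, map_add])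
  have φone : φ0 1 = 1 := hA (by rw [hφ0]; simp)
  have φzero : φ0 0 = 0 := hA (by rw [hφ0]; simp)
  have φcomm : ∀ a : Fq, φ0 (algebraMap Fq E a) = algebraMap Fq E a := by
    intro a
    apply hA
    rw [hφ0, ← algKL_C, σ.commutes]
  let φHom : E →ₐ[Fq] E :=
    { toFun := φ0, map_one' := φone, map_mul' := φmul, map_zero' := φzero,
      map_add' := φadd, commutes' := φcomm }
  have φinj : Function.Injective φHom := by
    intro a b h
    apply hA
    have : algebraMap E (RatFunc E) (φ0 a) = algebraMap E (RatFunc E) (φ0 b) := by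
      show algebraMap E (RatFunc E) (φHom a) = algebraMap E (RatFunc E) (φHom b)
      rw [h]
    rw [hφ0, hφ0] at this
    exact σ.injective this
  have φbij : Function.Bijective φHom := Finite.injective_iff_bijective.mp φinj
  let φ : E ≃ₐ[Fq] E := AlgEquiv.ofBijective φHom φbij
  refine ⟨⟨Units.mk0 eu heu0, φ⟩, ?_⟩
  apply autKL_ext
  intro p
  have hcomp : (algebraMap E[X] (RatFunc E)).comp (theta E eu (φ : E →+* E))
      = (σ : RatFunc E →+* RatFunc E).comp (algebraMap E[X] (RatFunc E)) := by
    apply ringHom_ext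
    · intro a
      simp only [RingHom.comp_apply]
      rw [theta_C, A_C, A_C]
      exact (hφ0 a).symm ▸ (hφ0 a)
    · simp only [RingHom.comp_apply]
      rw [theta_X, map_mul, A_C, A_X, heu, hu0def, mul_assoc, inv_mul_cancel₀ hs0, mul_one]
      rfl
  show FF0 _ _ _ = _
  rw [FF0_algebraMap]
  have h1 : ((Units.mk0 eu heu0 : Eˣ) : E) = eu := rfl
  rw [h1]
  exact DFunLike.congr_fun hcomp p

/-- The polynomial `X^#E + t·X` over `F_q(t)`. -/
def fPoly : (RatFunc Fq)[X] := X ^ Fintype.card E + C RatFunc.X * X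

lemma fPoly_monic : (fPoly Fq E).Monic := by
  apply monic_X_pow_add
  refine lt_of_le_of_lt (le_of_eq (degree_C_mul_X RatFunc.X_ne_zero)) ?_
  exact_mod_cast Fintype.one_lt_card (α := E)

lemma fPoly_ne_zero : fPoly Fq E ≠ 0 := (fPoly_monic Fq E).ne_zero

variable {E} in
lemma fPoly_aeval_root (e : E) :
    aeval (algebraMap E (RatFunc E) e * RatFunc.X) (fPoly Fq E) = 0 := by
  rw [fPoly]
  simp only [map_add, map_pow, map_mul, aeval_X, aeval_C]
  rw [algKL_X, mul_pow, pow_card_A, X_pow_card]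
  ring

lemma prod_univ_X_sub_C :
    (∏ a : E, (X - C a) : E[X]) = X ^ Fintype.card E - X := by
  have hmonic : (X ^ Fintype.card E - X : E[X]).Monic := by
    apply monic_X_pow_sub
    rw [degree_X]
    exact_mod_cast Fintype.one_lt_card (α := E)
  have hndeg : (X ^ Fintype.card E - X : E[X]).natDegree = Fintype.card E :=
    FiniteField.X_pow_card_sub_X_natDegree_eq E Fintype.one_lt_card
  have hsplits : Splits (X ^ Fintype.card E - X : E[X]) := by
    rw [splits_iff_card_roots, FiniteField.roots_X_pow_card_sub_X, hndeg]
    simp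
  have h := hsplits.eq_prod_roots_of_monic hmonic
  rw [FiniteField.roots_X_pow_card_sub_X] at h
  rw [Finset.prod_eq_multiset_prod]
  exact h.symm

/-- The substitution `E[X] → (E(s))[X]`. -/
def psi : E[X] →+* (RatFunc E)[X] :=
  eval₂RingHom (C.comp (algebraMap E (RatFunc E))) (C RatFunc.X⁻¹ * X)

lemma fPoly_map_eq_prod :
    (fPoly Fq E).map (algebraMap (RatFunc Fq) (RatFunc E))
      = ∏ e : E, (X - C (algebraMap E (RatFunc E) e * RatFunc.X)) := by
  have hs0 : (RatFunc.X : RatFunc E) ≠ 0 := RatFunc.X_ne_zero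
  have h1 : (fPoly Fq E).map (algebraMap (RatFunc Fq) (RatFunc E))
      = X ^ Fintype.card E - C (RatFunc.X ^ (Fintype.card E - 1)) * X := by
    rw [fPoly]
    simp only [Polynomial.map_add, Polynomial.map_pow, Polynomial.map_mul, map_X, map_C]
    rw [algKL_X, map_neg, map_pow]
    ring
  rw [h1]
  symm
  have h2 : ∀ e : E, (X - C (algebraMap E (RatFunc E) e * RatFunc.X) : (RatFunc E)[X])
      = C RatFunc.X * (C RatFunc.X⁻¹ * X - C (algebraMap E (RatFunc E) e)) := by
    intro e
    rw [mul_sub, ← mul_assoc, ← C_mul, mul_inv_cancel₀ hs0, C_1, one_mul, ← C_mul]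
    ring_nf
  calc ∏ e : E, (X - C (algebraMap E (RatFunc E) e * RatFunc.X))
      = ∏ e : E, (C RatFunc.X * (C RatFunc.X⁻¹ * X - C (algebraMap E (RatFunc E) e))) :=
        Finset.prod_congr rfl fun e _ => h2 e
    _ = (C (RatFunc.X : RatFunc E)) ^ Fintype.card E
          * ∏ e : E, (C RatFunc.X⁻¹ * X - C (algebraMap E (RatFunc E) e)) := by
        rw [Finset.prod_mul_distrib, Finset.prod_const, Finset.card_univ]
    _ = (C (RatFunc.X : RatFunc E)) ^ Fintype.card E
          * psi E (∏ a : E, (X - C a)) := by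
        rw [map_prod]
        congr 1
        refine Finset.prod_congr rfl fun a _ => ?_
        rw [psi]
        simp only [coe_eval₂RingHom, eval₂_sub, eval₂_X, eval₂_C]
        rfl
    _ = X ^ Fintype.card E - C (RatFunc.X ^ (Fintype.card E - 1)) * X := by
        rw [prod_univ_X_sub_C, map_sub, psi]
        simp only [coe_eval₂RingHom, eval₂_X_pow, eval₂_X]
        rw [mul_sub, mul_pow]
        rw [show (C (RatFunc.X : RatFunc E)) ^ Fintype.card E *
              (C (RatFunc.X⁻¹ : RatFunc E) ^ Fintype.card E * X ^ Fintype.card E)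
            = X ^ Fintype.card E from by
          rw [← mul_assoc, ← mul_pow, ← C_mul, mul_inv_cancel₀ hs0, C_1, one_pow, one_mul]]
        rw [show (C (RatFunc.X : RatFunc E)) ^ Fintype.card E * (C RatFunc.X⁻¹ * X)
            = C (RatFunc.X ^ (Fintype.card E - 1)) * X from by
          rw [← mul_assoc, ← C_pow, ← C_mul, X_pow_card E, mul_assoc, mul_inv_cancel₀ hs0,
            mul_one]]

lemma fPoly_splits :
    Splits ((fPoly Fq E).map (algebraMap (RatFunc Fq) (RatFunc E))) := by
  rw [fPoly_map_eq_prod]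
  exact Splits.prod fun e _ => Splits.X_sub_C _

variable {E} in
lemma root_isIntegral (e : E) :
    IsIntegral (RatFunc Fq) (algebraMap E (RatFunc E) e * RatFunc.X) :=
  ⟨fPoly Fq E, fPoly_monic Fq E, by
    rw [← aeval_def]; exact fPoly_aeval_root Fq e⟩

lemma adjoin_range_top :
    IntermediateField.adjoin (RatFunc Fq)
      (Set.range (fun e : E => algebraMap E (RatFunc E) e * RatFunc.X)) = ⊤ := by
  set T := IntermediateField.adjoin (RatFunc Fq)
      (Set.range (fun e : E => algebraMap E (RatFunc E) e * RatFunc.X)) with hT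
  have hX : (RatFunc.X : RatFunc E) ∈ T := by
    have h1 : algebraMap E (RatFunc E) 1 * RatFunc.X ∈ T :=
      IntermediateField.subset_adjoin _ _ ⟨1, rfl⟩
    rwa [map_one, one_mul] at h1
  have hAmem : ∀ e : E, algebraMap E (RatFunc E) e ∈ T := by
    intro e
    rcases eq_or_ne e 0 with rfl | he
    · rw [map_zero]; exact T.zero_mem
    · have h1 : algebraMap E (RatFunc E) e * RatFunc.X ∈ T :=
        IntermediateField.subset_adjoin _ _ ⟨e, rfl⟩
      have h2 := T.mul_mem h1 (T.inv_mem hX)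
      rwa [mul_assoc, mul_inv_cancel₀ RatFunc.X_ne_zero, mul_one] at h2
  have hp : ∀ p : E[X], algebraMap E[X] (RatFunc E) p ∈ T := by
    intro p
    induction p using Polynomial.induction_on' with
    | add p q hp hq => rw [map_add]; exact T.add_mem hp hq
    | monomial n a =>
      rw [← C_mul_X_pow_eq_monomial, map_mul, map_pow, A_C, A_X]
      exact T.mul_mem (hAmem a) (T.pow_mem hX n)
  rw [eq_top_iff]
  intro x _
  obtain ⟨p, r, _, hpr⟩ := IsFractionRing.div_surjective (A := E[X]) x
  rw [← hpr]
  exact T.div_mem (hp p) (hp r)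

instance isSF : IsSplittingField (RatFunc Fq) (RatFunc E) (fPoly Fq E) := by
  constructor
  · exact fPoly_splits Fq E
  · have hsub : Set.range (fun e : E => algebraMap E (RatFunc E) e * RatFunc.X)
        ⊆ (fPoly Fq E).rootSet (RatFunc E) := by
      rintro x ⟨e, rfl⟩
      rw [mem_rootSet]
      exact ⟨fPoly_ne_zero Fq E, fPoly_aeval_root Fq e⟩
    have halg : ∀ x ∈ Set.range (fun e : E => algebraMap E (RatFunc E) e * RatFunc.X),
        IsAlgebraic (RatFunc Fq) x := by
      rintro x ⟨e, rfl⟩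
      exact (root_isIntegral Fq e).isAlgebraic
    have h1 : Algebra.adjoin (RatFunc Fq)
        (Set.range (fun e : E => algebraMap E (RatFunc E) e * RatFunc.X)) = ⊤ := by
      have h2 := IntermediateField.adjoin_toSubalgebra_of_isAlgebraic halg
      rw [adjoin_range_top, IntermediateField.top_toSubalgebra] at h2
      exact h2.symm
    rw [eq_top_iff, ← h1]
    exact Algebra.adjoin_mono hsub

end

end GammaLAux

open Polynomial in
/-- Let `q` be a prime power and `n` an odd prime. The Galois group of
`x^(qⁿ) + t·x` over `F_q(t)` is isomorphic to `ΓL(1, qⁿ)`, i.e. to the semidirect product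
of `(F_{qⁿ})ˣ` by `Gal(F_{qⁿ}/F_q)` acting naturally; in particular it has order
`n·(qⁿ − 1)`. -/
theorem galoisGroup_X_pow_add_tX_eq_gammaL
    (q n : ℕ) (Fq : Type) [Field Fq] [Fintype Fq]
    (hq : Fintype.card Fq = q)
    (hn : n.Prime) (hnodd : Odd n)
    (E : Type) [Field E] [Fintype E] [Algebra Fq E]
    (hE : Fintype.card E = q ^ n) :
    Nonempty
      (((Polynomial.X ^ q ^ n + Polynomial.C (RatFunc.X : RatFunc Fq) * Polynomial.X :
          Polynomial (RatFunc Fq)).Gal) ≃*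
        (Eˣ ⋊[galOnUnits Fq E] (E ≃ₐ[Fq] E))) ∧
    Nat.card ((Polynomial.X ^ q ^ n + Polynomial.C (RatFunc.X : RatFunc Fq) * Polynomial.X :
        Polynomial (RatFunc Fq)).Gal) = n * (q ^ n - 1) := by
  classical
  letI : Algebra (RatFunc Fq) (RatFunc E) := GammaLAux.algKL Fq E
  have hfeq : (X ^ q ^ n + C (RatFunc.X : RatFunc Fq) * X : (RatFunc Fq)[X])
      = GammaLAux.fPoly Fq E := by
    rw [GammaLAux.fPoly, hE]
  rw [hfeq]
  haveI := GammaLAux.isSF Fq E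
  have e1 : (Eˣ ⋊[galOnUnits Fq E] (E ≃ₐ[Fq] E)) ≃* (RatFunc E ≃ₐ[RatFunc Fq] RatFunc E) :=
    MulEquiv.ofBijective (GammaLAux.FF Fq E)
      ⟨GammaLAux.FF_injective Fq E, GammaLAux.FF_surjective Fq E⟩
  have e2 : (RatFunc E ≃ₐ[RatFunc Fq] RatFunc E) ≃* (GammaLAux.fPoly Fq E).Gal :=
    AlgEquiv.autCongr (IsSplittingField.algEquiv (RatFunc E) (GammaLAux.fPoly Fq E))
  have e3 := (e1.trans e2).symm
  refine ⟨⟨e3⟩, ?_⟩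
  have hcard1 : Nat.card ((GammaLAux.fPoly Fq E).Gal)
      = Nat.card (Eˣ ⋊[galOnUnits Fq E] (E ≃ₐ[Fq] E)) :=
    Nat.card_congr e3.toEquiv
  rw [hcard1]
  have eqv : (Eˣ ⋊[galOnUnits Fq E] (E ≃ₐ[Fq] E)) ≃ (Eˣ × (E ≃ₐ[Fq] E)) :=
    ⟨fun g => (g.left, g.right), fun p => ⟨p.1, p.2⟩, fun g => rfl, fun p => rfl⟩
  rw [Nat.card_congr eqv, Nat.card_prod, Nat.card_units]
  have hq2 : 2 ≤ q := by
    rw [← hq]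
    exact Fintype.one_lt_card
  have hfr : Module.finrank Fq E = n := by
    have hc : Fintype.card E = Fintype.card Fq ^ Module.finrank Fq E :=
      Module.card_eq_pow_finrank
    rw [hq, hE] at hc
    exact (Nat.pow_right_injective hq2 hc).symm
  have hn' : Nat.card (E ≃ₐ[Fq] E) = n := by
    rw [IsGalois.card_aut_eq_finrank, hfr]
  rw [hn', Nat.card_eq_fintype_card, hE, mul_comm]
end

section
/- Let q be a prime power and n ≥ 1. Regard the finite field F_{q^n} as an n-dimensional vector space over F_q. Let z be a generator of the cyclic group (F_{q^n})^×, let C be the cyclic subgroup of the group G of F_q-linear automorphisms of F_{q^n} generated by multiplication by z, and let N(C) be the normalizer of C in G. If w ∈ N(C) fixes some nonzero vector v ∈ F_{q^n}, then the order of w divides n. -/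
/-- Regard `F_{qⁿ}` (a field `E` with `qⁿ` elements) as an `n`-dimensional
vector space over `F_q`. Let `z` be a generator of `Eˣ`, let `C` be the cyclic subgroup of
the group of `F_q`-linear automorphisms of `E` generated by multiplication by `z`, and let
`N(C)` be its normalizer. If `w ∈ N(C)` fixes some nonzero vector `v ∈ E`, then the order
of `w` divides `n`. -/
theorem normalizer_of_singer_fixed_point_order_dvd
    (q n : ℕ) (hn : 1 ≤ n)
    (Fq : Type) [Field Fq] [Fintype Fq] (hq : Fintype.card Fq = q)
    (E : Type) [Field E] [Fintype E] [Algebra Fq E] (hE : Fintype.card E = q ^ n)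
    (z : Eˣ) (hz : ∀ u : Eˣ, u ∈ Subgroup.zpowers z)
    (w : (Module.End Fq E)ˣ)
    (hw : w ∈ Subgroup.normalizer ((Subgroup.zpowers
        (Units.map (Algebra.lmul Fq E).toRingHom.toMonoidHom z) : Set (Module.End Fq E)ˣ)))
    (v : E) (hv : v ≠ 0) (hfix : (w : Module.End Fq E) v = v) :
    orderOf w ∣ n := by
  set L : Eˣ →* (Module.End Fq E)ˣ :=
    Units.map (Algebra.lmul Fq E).toRingHom.toMonoidHom with hL
  -- application of `L`
  have happ : ∀ (u : Eˣ) (x : E), ((L u : (Module.End Fq E)ˣ) : Module.End Fq E) x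
      = (u : E) * x := by
    intro u x
    simp [hL]
  -- conjugation relation from the normalizer hypothesis
  obtain ⟨m, hm⟩ : ∃ m : ℤ, (L z) ^ m = w * L z * w⁻¹ := by
    have := (Subgroup.mem_normalizer_iff.mp hw (L z)).mp (Subgroup.mem_zpowers _)
    exact Subgroup.mem_zpowers_iff.mp this
  have hconjk : ∀ k : ℤ, w * L (z ^ k) = L (z ^ (m * k)) * w := by
    intro k
    have h1 : (w * L z * w⁻¹) ^ k = w * (L z) ^ k * w⁻¹ := by
      simpa using (map_zpow (MulAut.conj w) (L z) k).symm
    have h2 : L (z ^ (m * k)) = w * L (z ^ k) * w⁻¹ := by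
      rw [map_zpow, map_zpow, ← h1, ← hm, zpow_mul]
    rw [h2]
    group
  -- semilinearity
  have hsemi : ∀ (k : ℤ) (b : E),
      (w : Module.End Fq E) (((z ^ k : Eˣ) : E) * b)
        = ((z ^ (m * k) : Eˣ) : E) * (w : Module.End Fq E) b := by
    intro k b
    have h := congrArg (fun (u : (Module.End Fq E)ˣ) => (u : Module.End Fq E) b) (hconjk k)
    simp only [Units.val_mul, Module.End.mul_apply, happ] at h
    exact h
  set c : E := (w : Module.End Fq E) 1 with hcdef
  have hc : c ≠ 0 := by
    intro h
    have h1 : ((w⁻¹ : (Module.End Fq E)ˣ) : Module.End Fq E)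
        ((w : Module.End Fq E) 1) = 1 := by
      have h := congrArg (fun (u : (Module.End Fq E)ˣ) => (u : Module.End Fq E) 1)
        (inv_mul_cancel w)
      simp only [Units.val_mul, Module.End.mul_apply, Units.val_one,
        Module.End.one_apply] at h
      exact h
    rw [← hcdef, h, map_zero] at h1
    exact one_ne_zero h1.symm
  -- the quotient map is an algebra homomorphism
  have hmul : ∀ a b : E, c⁻¹ * (w : Module.End Fq E) (a * b)
      = (c⁻¹ * (w : Module.End Fq E) a) * (c⁻¹ * (w : Module.End Fq E) b) := by
    intro a b
    rcases eq_or_ne a 0 with rfl | ha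
    · simp
    obtain ⟨k, hk⟩ := Subgroup.mem_zpowers_iff.mp (hz (Units.mk0 a ha))
    have hak : ((z ^ k : Eˣ) : E) = a := by rw [hk]; rfl
    have h1 : (w : Module.End Fq E) (a * b)
        = ((z ^ (m * k) : Eˣ) : E) * (w : Module.End Fq E) b := by
      rw [← hak]; exact hsemi k b
    have h2 : (w : Module.End Fq E) a = ((z ^ (m * k) : Eˣ) : E) * c := by
      have := hsemi k 1
      rw [hak, mul_one] at this
      rw [this]
    rw [h1, h2]
    field_simp
  set ψ : E →ₐ[Fq] E :=
    { toFun := fun x => c⁻¹ * (w : Module.End Fq E) x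
      map_one' := inv_mul_cancel₀ hc
      map_mul' := hmul
      map_zero' := by simp
      map_add' := by
        intro a b
        show c⁻¹ * (w : Module.End Fq E) (a + b) = _
        rw [map_add]; ring
      commutes' := by
        intro r
        have h : (algebraMap Fq E) r = r • (1 : E) := Algebra.algebraMap_eq_smul_one r
        show c⁻¹ * (w : Module.End Fq E) ((algebraMap Fq E) r) = (algebraMap Fq E) r
        rw [h, map_smul, ← hcdef, mul_smul_comm, inv_mul_cancel₀ hc] } with hψ
  have hψinj : Function.Injective ψ := ψ.toRingHom.injective
  set σ : E ≃ₐ[Fq] E :=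
    AlgEquiv.ofBijective ψ ((Finite.injective_iff_bijective).mp hψinj) with hσ
  have hσapp : ∀ x : E, σ x = c⁻¹ * (w : Module.End Fq E) x := fun x => rfl
  have hkey : ∀ x : E, (w : Module.End Fq E) x = c * σ x := by
    intro x
    rw [hσapp, ← mul_assoc, mul_inv_cancel₀ hc, one_mul]
  -- finrank equals n
  have hq2 : 2 ≤ q := by
    rw [← hq]
    exact Fintype.one_lt_card
  have hfr : Module.finrank Fq E = n := by
    have h1 : Fintype.card E = q ^ Module.finrank Fq E := by
      rw [Module.card_eq_pow_finrank (K := Fq) (V := E), hq]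
    rw [hE] at h1
    exact (Nat.pow_right_injective hq2 h1).symm
  have hσn : σ ^ n = 1 := by
    have h1 : σ ^ Fintype.card (E ≃ₐ[Fq] E) = 1 := pow_card_eq_one
    rwa [← Nat.card_eq_fintype_card, IsGalois.card_aut_eq_finrank Fq E, hfr] at h1
  -- iterate formula
  have hiter : ∀ k : ℕ, ∃ d : E, ∀ x : E,
      ((w ^ k : (Module.End Fq E)ˣ) : Module.End Fq E) x = d * (σ ^ k) x := by
    intro k
    induction k with
    | zero => exact ⟨1, by intro x; simp⟩
    | succ k ih =>
      obtain ⟨d, hd⟩ := ih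
      refine ⟨d * (σ ^ k) c, fun x => ?_⟩
      have h1 : ((w ^ (k + 1) : (Module.End Fq E)ˣ) : Module.End Fq E) x
          = ((w ^ k : (Module.End Fq E)ˣ) : Module.End Fq E)
              ((w : Module.End Fq E) x) := by
        rw [pow_succ, Units.val_mul, Module.End.mul_apply]
      rw [h1, hd, hkey, map_mul, pow_succ, AlgEquiv.mul_apply]
      ring
  -- w^k fixes v
  have hfixpow : ∀ k : ℕ, ((w ^ k : (Module.End Fq E)ˣ) : Module.End Fq E) v = v := by
    intro k
    induction k with
    | zero => simp
    | succ k ih =>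
      rw [pow_succ, Units.val_mul, Module.End.mul_apply, hfix, ih]
  obtain ⟨d, hd⟩ := hiter n
  have hdx : ∀ x : E, ((w ^ n : (Module.End Fq E)ˣ) : Module.End Fq E) x = d * x := by
    intro x
    rw [hd, hσn]
    simp
  have hd1 : d = 1 := by
    have h := hdx v
    rw [hfixpow n] at h
    have h2 : d * v = 1 * v := by rw [one_mul]; exact h.symm
    exact mul_right_cancel₀ hv h2
  have hwn : w ^ n = 1 := by
    ext x
    rw [hdx x, hd1, one_mul]
    simp
  exact orderOf_dvd_of_pow_eq_one hwn
end

section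
/- Let q be a prime power and n ≥ 1. Regard F_{q^n} as an n-dimensional vector space over F_q, let z be a generator of (F_{q^n})^×, and let C be the cyclic subgroup of the group of F_q-linear automorphisms of F_{q^n} generated by multiplication by z. Then the normalizer N(C) of C in the group of F_q-linear automorphisms of F_{q^n} is generated by C together with the Frobenius map α ↦ α^q, and has order n(q^n − 1). -/
/-- Regard `F_{qⁿ}` (a field `E` with `qⁿ` elements) as an `n`-dimensional
vector space over `F_q`, let `z` be a generator of `Eˣ` and `C` the cyclic subgroup of the
group of `F_q`-linear automorphisms of `E` generated by multiplication by `z`. Then the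
normalizer `N(C)` is generated by `C` together with the Frobenius map `α ↦ α^q`, and
`N(C)` has order `n·(qⁿ − 1)`. -/
theorem normalizer_of_singer_eq_closure_frobenius
    (q n : ℕ) (hn : 1 ≤ n)
    (Fq : Type) [Field Fq] [Fintype Fq] (hq : Fintype.card Fq = q)
    (E : Type) [Field E] [Fintype E] [Algebra Fq E] (hE : Fintype.card E = q ^ n)
    (z : Eˣ) (hz : ∀ u : Eˣ, u ∈ Subgroup.zpowers z)
    (φ : (Module.End Fq E)ˣ) (hφ : ∀ x : E, (φ : Module.End Fq E) x = x ^ q) :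
    Subgroup.normalizer ((Subgroup.zpowers
        (Units.map (Algebra.lmul Fq E).toRingHom.toMonoidHom z) : Set ((Module.End Fq E)ˣ))) =
      Subgroup.closure
        ((Subgroup.zpowers
            (Units.map (Algebra.lmul Fq E).toRingHom.toMonoidHom z) : Set ((Module.End Fq E)ˣ))
          ∪ {φ}) ∧
    Nat.card (Subgroup.normalizer ((Subgroup.zpowers
        (Units.map (Algebra.lmul Fq E).toRingHom.toMonoidHom z) : Set ((Module.End Fq E)ˣ)))) =
      n * (q ^ n - 1) := by
  classical
  set L : Eˣ →* (Module.End Fq E)ˣ :=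
    Units.map (Algebra.lmul Fq E).toRingHom.toMonoidHom with hLdef
  have hLapp : ∀ (u : Eˣ) (x : E), ((L u : Module.End Fq E)) x = (u : E) * x :=
    fun u x => rfl
  have h2q : 2 ≤ q := hq ▸ Fintype.one_lt_card
  have hfinrank : Module.finrank Fq E = n := by
    have h := Module.card_eq_pow_finrank (K := Fq) (V := E)
    rw [hq, hE] at h
    exact Nat.pow_right_injective h2q h.symm
  have horder_z : orderOf z = q ^ n - 1 := by
    have htop : Subgroup.zpowers z = ⊤ := (Subgroup.eq_top_iff' _).2 hz
    rw [← Nat.card_zpowers, htop, Subgroup.card_top, Nat.card_eq_fintype_card,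
      Fintype.card_units, hE]
  have hpow_n : ∀ x : E, x ^ q ^ n = x := fun x => by
    rw [← hE]; exact FiniteField.pow_card x
  have hpow_lt : ∀ d : ℕ, 0 < d → (∀ x : E, x ^ q ^ d = x) → n ≤ d := by
    intro d hd hfix
    by_contra hnd
    push_neg at hnd
    have hz1 : z ^ (q ^ d - 1) = 1 := by
      have h1 : z ^ q ^ d = z := by
        ext
        rw [Units.val_pow_eq_pow_val]
        exact hfix z
      have h2 : z ^ (q ^ d - 1) * z = z := by
        rw [← pow_succ, Nat.sub_add_cancel (Nat.one_le_pow _ _ (by omega))]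
        exact h1
      calc z ^ (q ^ d - 1) = z ^ (q ^ d - 1) * z * z⁻¹ := by group
        _ = z * z⁻¹ := by rw [h2]
        _ = 1 := by group
    have hdvd : q ^ n - 1 ∣ q ^ d - 1 := horder_z ▸ orderOf_dvd_of_pow_eq_one hz1
    have hlt : q ^ d < q ^ n := Nat.pow_lt_pow_right (by omega) hnd
    have hpos : 0 < q ^ d - 1 := by
      have : 2 ≤ q ^ d := le_trans h2q (Nat.le_self_pow (by omega) q)
      omega
    have := Nat.le_of_dvd hpos hdvd
    omega
  have hφpow : ∀ (m : ℕ) (x : E),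
      ((φ ^ m : (Module.End Fq E)ˣ) : Module.End Fq E) x = x ^ q ^ m := by
    intro m
    induction m with
    | zero => intro x; simp
    | succ k ih =>
      intro x
      rw [pow_succ, Units.val_mul, Module.End.mul_apply, hφ, ih, ← pow_mul, ← pow_succ']
  have horderφ : orderOf φ = n := by
    rw [orderOf_eq_iff (by omega)]
    constructor
    · ext1
      apply LinearMap.ext
      intro x
      rw [hφpow n x, Units.val_one, Module.End.one_apply]
      exact hpow_n x
    · intro m hmn hm0 heq
      have hfix : ∀ x : E, x ^ q ^ m = x := by
        intro x
        rw [← hφpow m x, heq, Units.val_one, Module.End.one_apply]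
      exact absurd (hpow_lt m hm0 hfix) (by omega)
  -- constructing algebra automorphisms from multiplicative linear maps
  have hAlg : ∀ f : E →ₗ[Fq] E, f 1 = 1 → (∀ a b : E, f (a * b) = f a * f b) →
      ∃ σ : E ≃ₐ[Fq] E, ∀ x, σ x = f x := by
    intro f h1 hmul
    let A : E →ₐ[Fq] E := AlgHom.ofLinearMap f h1 hmul
    have hinj : Function.Injective A := A.toRingHom.injective
    exact ⟨AlgEquiv.ofBijective A (Finite.injective_iff_bijective.mp hinj),
      fun x => rfl⟩
  obtain ⟨F, hF0⟩ := hAlg (φ : Module.End Fq E)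
    (by rw [hφ]; exact one_pow q)
    (fun a b => by rw [hφ, hφ, hφ, mul_pow])
  have hF : ∀ x : E, F x = x ^ q := fun x => by rw [hF0, hφ]
  have hFpow : ∀ (m : ℕ) (x : E), (F ^ m) x = x ^ q ^ m := by
    intro m
    induction m with
    | zero => intro x; simp
    | succ k ih =>
      intro x
      rw [pow_succ, AlgEquiv.mul_apply, hF, ih, ← pow_mul, ← pow_succ']
  have horderF : orderOf F = n := by
    rw [orderOf_eq_iff (by omega)]
    constructor
    · apply AlgEquiv.ext
      intro x
      rw [hFpow n x, hpow_n, AlgEquiv.one_apply]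
    · intro m hmn hm0 heq
      have hfix : ∀ x : E, x ^ q ^ m = x := by
        intro x
        rw [← hFpow m x, heq, AlgEquiv.one_apply]
      exact absurd (hpow_lt m hm0 hfix) (by omega)
  have hGal : ∀ σ : E ≃ₐ[Fq] E, ∃ m : ℕ, F ^ m = σ := by
    have htop : Subgroup.zpowers F = ⊤ := by
      apply Subgroup.eq_top_of_card_eq
      rw [Nat.card_zpowers, horderF,
        IsGalois.card_aut_eq_finrank, hfinrank]
    intro σ
    have hmem : σ ∈ Subgroup.zpowers F := by rw [htop]; trivial
    exact mem_powers_iff_mem_zpowers.mpr hmem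
  have hC_of : ∀ v : Eˣ, L v ∈ Subgroup.zpowers (L z) := by
    intro v
    obtain ⟨k, hk⟩ := Subgroup.mem_zpowers_iff.mp (hz v)
    exact Subgroup.mem_zpowers_iff.mpr ⟨k, by rw [← map_zpow, hk]⟩
  have hC_to : ∀ c ∈ Subgroup.zpowers (L z), ∃ v : Eˣ, L v = c := by
    intro c hc
    obtain ⟨k, hk⟩ := Subgroup.mem_zpowers_iff.mp hc
    exact ⟨z ^ k, by rw [map_zpow, hk]⟩
  haveI : Finite (Module.End Fq E) :=
    Finite.of_injective (fun f : Module.End Fq E => (f : E → E)) DFunLike.coe_injective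
  have hφN : φ ∈ Subgroup.normalizer (Subgroup.zpowers (L z) : Set ((Module.End Fq E)ˣ)) := by
    apply Subgroup.mem_normalizer_fintype
    intro c hc
    obtain ⟨v, hv⟩ := hC_to c hc
    have hconj : φ * c * φ⁻¹ = L (v ^ q) := by
      rw [← hv, mul_inv_eq_iff_eq_mul]
      ext1
      apply LinearMap.ext
      intro x
      rw [Units.val_mul, Units.val_mul, Module.End.mul_apply, Module.End.mul_apply,
        hLapp, hφ, hLapp, hφ, Units.val_pow_eq_pow_val, mul_pow]
    rw [hconj]
    exact hC_of (v ^ q)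
  -- the decomposition of an arbitrary element of the normalizer
  have hdecomp : ∀ g ∈ Subgroup.normalizer (Subgroup.zpowers (L z) : Set ((Module.End Fq E)ˣ)),
      ∃ (u : Eˣ) (m : ℕ), g = L u * φ ^ m := by
    intro g hg
    set gE : Module.End Fq E := (g : Module.End Fq E) with hgE
    have hg1 : gE 1 ≠ 0 := by
      intro h0
      have h1 : ((g⁻¹ * g : (Module.End Fq E)ˣ) : Module.End Fq E) 1 = 1 := by
        rw [inv_mul_cancel, Units.val_one, Module.End.one_apply]
      rw [Units.val_mul, Module.End.mul_apply, ← hgE, h0, map_zero] at h1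
      exact zero_ne_one h1
    have hmulg : ∀ a b : E, gE (a * b) * gE 1 = gE a * gE b := by
      intro a b
      rcases eq_or_ne a 0 with rfl | ha
      · simp
      · set ua : Eˣ := Units.mk0 a ha with hua
        have hmem : g * L ua * g⁻¹ ∈ Subgroup.zpowers (L z) :=
          ((Subgroup.mem_normalizer_iff.mp hg) (L ua)).mp (hC_of ua)
        obtain ⟨w, hw⟩ := hC_to _ hmem
        have key : ∀ x : E, (w : E) * gE x = gE (a * x) := by
          intro x
          have h1 : (L w * g : (Module.End Fq E)ˣ) = g * L ua := by
            rw [hw, inv_mul_cancel_right]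
          have h2 := congrArg
            (fun t : (Module.End Fq E)ˣ => ((t : Module.End Fq E)) x) h1
          simpa [Units.val_mul, Module.End.mul_apply, hLapp, hua, ← hgE] using h2
        have k1 := key 1
        rw [mul_one] at k1
        have kb := key b
        calc gE (a * b) * gE 1 = ((w : E) * gE b) * gE 1 := by rw [kb]
          _ = ((w : E) * gE 1) * gE b := by ring
          _ = gE a * gE b := by rw [k1]
    have hone : ((gE 1)⁻¹ • gE) 1 = 1 := by
      rw [LinearMap.smul_apply, smul_eq_mul, inv_mul_cancel₀ hg1]
    have hmul' : ∀ a b : E, ((gE 1)⁻¹ • gE) (a * b) =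
        ((gE 1)⁻¹ • gE) a * ((gE 1)⁻¹ • gE) b := by
      intro a b
      have hab : gE (a * b) = gE a * gE b * (gE 1)⁻¹ :=
        (eq_mul_inv_iff_mul_eq₀ hg1).mpr (hmulg a b)
      simp only [LinearMap.smul_apply, smul_eq_mul]
      rw [hab]
      field_simp
    obtain ⟨σ, hσ⟩ := hAlg ((gE 1)⁻¹ • gE) hone hmul'
    obtain ⟨m, hm⟩ := hGal σ
    refine ⟨Units.mk0 (gE 1) hg1, m, ?_⟩
    ext1
    apply LinearMap.ext
    intro x
    have h3 : σ x = (gE 1)⁻¹ * gE x := by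
      rw [hσ, LinearMap.smul_apply, smul_eq_mul]
    have h4 : σ x = x ^ q ^ m := by rw [← hm, hFpow]
    have h5 : gE x = gE 1 * x ^ q ^ m := by
      rw [← h4, h3]
      field_simp
    rw [Units.val_mul, Module.End.mul_apply, hLapp, hφpow, Units.val_mk0]
    exact h5
  have hNle : ∀ (u : Eˣ) (m : ℕ),
      L u * φ ^ m ∈ Subgroup.normalizer (Subgroup.zpowers (L z) : Set ((Module.End Fq E)ˣ)) :=
    fun u m => Subgroup.mul_mem _ (Subgroup.le_normalizer (hC_of u))
      (Subgroup.pow_mem _ hφN m)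
  constructor
  · apply le_antisymm
    · intro g hg
      obtain ⟨u, m, rfl⟩ := hdecomp g hg
      have h1 : L u ∈ Subgroup.closure
          ((Subgroup.zpowers (L z) : Set ((Module.End Fq E)ˣ)) ∪ {φ}) :=
        Subgroup.subset_closure (Set.mem_union_left _ (hC_of u))
      have h2 : φ ∈ Subgroup.closure
          ((Subgroup.zpowers (L z) : Set ((Module.End Fq E)ˣ)) ∪ {φ}) :=
        Subgroup.subset_closure (Set.mem_union_right _ (Set.mem_singleton φ))
      exact Subgroup.mul_mem _ h1 (Subgroup.pow_mem _ h2 m)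
    · rw [Subgroup.closure_le]
      apply Set.union_subset
      · exact fun x hx => Subgroup.le_normalizer hx
      · intro x hx
        rw [Set.mem_singleton_iff] at hx
        subst hx
        exact hφN
  · haveI : NeZero n := ⟨by omega⟩
    set N := Subgroup.normalizer (Subgroup.zpowers (L z) : Set ((Module.End Fq E)ˣ)) with hN
    let e : Eˣ × ZMod n → N := fun p =>
      ⟨L p.1 * φ ^ (p.2.val), hNle p.1 p.2.val⟩
    have hbij : Function.Bijective e := by
      constructor
      · rintro ⟨u, a⟩ ⟨v, b⟩ hee
        have heq : L u * φ ^ a.val = L v * φ ^ b.val := congrArg Subtype.val hee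
        have happ : ∀ (w : Eˣ) (c : ℕ),
            ((L w * φ ^ c : (Module.End Fq E)ˣ) : Module.End Fq E) 1 = (w : E) := by
          intro w c
          rw [Units.val_mul, Module.End.mul_apply, hφpow, one_pow, hLapp, mul_one]
        have huv : (u : E) = (v : E) := by
          rw [← happ u a.val, ← happ v b.val, heq]
        have huv' : u = v := Units.ext huv
        subst huv'
        have hφab : φ ^ a.val = φ ^ b.val := mul_left_cancel heq
        have hab : a.val = b.val := by
          apply pow_injOn_Iio_orderOf _ _ hφab
          · rw [horderφ]; exact Set.mem_Iio.mpr (ZMod.val_lt a)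
          · rw [horderφ]; exact Set.mem_Iio.mpr (ZMod.val_lt b)
        have : a = b := ZMod.val_injective n hab
        rw [this]
      · rintro ⟨g, hg⟩
        obtain ⟨u, m, rfl⟩ := hdecomp g hg
        refine ⟨(u, (m : ZMod n)), ?_⟩
        apply Subtype.ext
        show L u * φ ^ ((m : ZMod n).val) = L u * φ ^ m
        congr 1
        rw [ZMod.val_natCast, ← horderφ, pow_mod_orderOf]
    calc Nat.card N = Nat.card (Eˣ × ZMod n) :=
          (Nat.card_congr (Equiv.ofBijective e hbij)).symm
      _ = (q ^ n - 1) * n := by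
          rw [Nat.card_prod, Nat.card_zmod, Nat.card_eq_fintype_card,
            Fintype.card_units, hE]
      _ = n * (q ^ n - 1) := mul_comm _ _
end

section
/- Let q be a power of an odd prime p and let L(x) be a monic q-linearized polynomial of q-degree n ≥ 1 in F_q(t)[x]. Let G(x) = L(x)/x (a polynomial of degree q^n − 1) and suppose the constant term c of G is nonzero. Then the discriminant of G equals (−1)^{(q^n − 1)/2} · c modulo squares in F_q(t); that is, there exists a nonzero s ∈ F_q(t) with disc(G) = (−1)^{(q^n − 1)/2} · c · s^2. -/
/-- The discriminant of a monic polynomial `g` of degree `m`, computed in its splitting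
field: `(−1)^(m(m−1)/2) · ∏ g'(αᵢ)`, the product running over the roots `αᵢ` of `g`
(with multiplicity) in the splitting field. -/
noncomputable def polyDisc {K : Type*} [Field K] (g : Polynomial K) : g.SplittingField :=
  (-1) ^ (g.natDegree * (g.natDegree - 1) / 2) *
    ((g.aroots g.SplittingField).map
      (fun α => Polynomial.aeval α (Polynomial.derivative g))).prod

/-- Let `q` be a power of an odd prime `p` and let
`L(x) = ∑_{i ≤ n} aᵢ x^(qⁱ)` be a monic `q`-linearized polynomial of `q`-degree `n ≥ 1`
over `F_q(t)`, and let `G(x) = L(x)/x = ∑_{i ≤ n} aᵢ x^(qⁱ − 1)` have nonzero constant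
term `c = a₀`. Then the discriminant of `G` equals `(−1)^((qⁿ−1)/2) · c` modulo nonzero
squares of `F_q(t)`. -/
theorem discriminant_of_linearized_div_X
    (p q n : ℕ) (hp : p.Prime) (hpodd : Odd p) (hq : ∃ e : ℕ, 0 < e ∧ q = p ^ e)
    (hn : 1 ≤ n)
    (Fq : Type) [Field Fq] [Fintype Fq] (hcard : Fintype.card Fq = q)
    (a : ℕ → RatFunc Fq) (hmonic : a n = 1) (hc : a 0 ≠ 0)
    (G : Polynomial (RatFunc Fq))
    (hG : G = ∑ i ∈ Finset.range (n + 1), Polynomial.C (a i) * Polynomial.X ^ (q ^ i - 1)) :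
    ∃ s : RatFunc Fq, s ≠ 0 ∧
      polyDisc G =
        algebraMap (RatFunc Fq) G.SplittingField
          ((-1) ^ ((q ^ n - 1) / 2) * a 0 * s ^ 2) := by
  classical
  obtain ⟨e, he, hqe⟩ := hq
  set φ := algebraMap (RatFunc Fq) G.SplittingField with hφ
  -- basic numerics
  have hp3 : 3 ≤ p := by
    rcases hpodd with ⟨k, hk⟩
    have := hp.two_le
    omega
  have hq3 : 3 ≤ q := by
    subst hqe
    calc 3 ≤ p := hp3
    _ ≤ p ^ e := Nat.le_self_pow (by omega) p
  have hqn3 : 3 ≤ q ^ n :=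
    le_trans hq3 (Nat.le_self_pow (by omega) q)
  have hqodd : Odd q := by subst hqe; exact hpodd.pow
  have hqnodd : Odd (q ^ n) := hqodd.pow
  -- characteristic
  have hqK : ((q : ℕ) : RatFunc Fq) = 0 := by
    have h0 : ((q : ℕ) : Fq) = 0 := by
      rw [← hcard]; exact FiniteField.cast_card_eq_zero Fq
    have h1 : ((q : ℕ) : RatFunc Fq) = algebraMap Fq (RatFunc Fq) ((q : ℕ) : Fq) :=
      (map_natCast _ q).symm
    rw [h1, h0, map_zero]
  have hqiK : ∀ i, 1 ≤ i → ((q ^ i : ℕ) : RatFunc Fq) = 0 := by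
    intro i hi
    rw [Nat.cast_pow, hqK, zero_pow (by omega)]
  -- coefficients of G
  have hGcoeff : ∀ k, G.coeff k
      = ∑ i ∈ Finset.range (n + 1), if k = q ^ i - 1 then a i else 0 := by
    intro k
    rw [hG, Polynomial.finset_sum_coeff]
    refine Finset.sum_congr rfl fun i _ => ?_
    rw [Polynomial.coeff_C_mul, Polynomial.coeff_X_pow, mul_ite, mul_one, mul_zero]
  have hcoefftop : G.coeff (q ^ n - 1) = 1 := by
    rw [hGcoeff, Finset.sum_eq_single n]
    · simp [hmonic]
    · intro i hi hne
      have hi' : i < n := by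
        have := Finset.mem_range.mp hi; omega
      have hlt : q ^ i < q ^ n := Nat.pow_lt_pow_right (by omega) hi'
      have hq1 : 1 ≤ q ^ i := Nat.one_le_pow _ _ (by omega)
      rw [if_neg (Nat.sub_lt_sub_right hq1 hlt).ne']
    · intro h; exact absurd (Finset.self_mem_range_succ n) h
  have hcoeff0 : G.coeff 0 = a 0 := by
    rw [hGcoeff, Finset.sum_eq_single 0]
    · simp
    · intro i hi hne
      have hi1 : 1 ≤ i := by omega
      have hle : q ≤ q ^ i := Nat.le_self_pow (by omega) q
      rw [if_neg (Nat.sub_pos_of_lt (by omega)).ne]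
    · intro h; exact absurd (Finset.mem_range.mpr (by omega)) h
  have hdegle : G.degree ≤ ((q ^ n - 1 : ℕ) : WithBot ℕ) := by
    rw [hG]
    refine (Polynomial.degree_sum_le _ _).trans (Finset.sup_le fun i hi => ?_)
    refine (Polynomial.degree_C_mul_X_pow_le _ _).trans ?_
    have hi' : i ≤ n := by have := Finset.mem_range.mp hi; omega
    have : q ^ i ≤ q ^ n := Nat.pow_le_pow_right (by omega) hi'
    exact_mod_cast Nat.sub_le_sub_right this 1
  have hdegeq : G.degree = ((q ^ n - 1 : ℕ) : WithBot ℕ) :=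
    le_antisymm hdegle (Polynomial.le_degree_of_ne_zero (by rw [hcoefftop]; exact one_ne_zero))
  have hnat : G.natDegree = q ^ n - 1 := Polynomial.natDegree_eq_of_degree_eq_some hdegeq
  have hmon : G.Monic := by
    unfold Polynomial.Monic Polynomial.leadingCoeff
    rw [hnat, hcoefftop]
  -- the key identity  X * G' + G = C (a 0)
  have hkey : Polynomial.X * Polynomial.derivative G + G = Polynomial.C (a 0) := by
    rw [hG, Polynomial.derivative_sum, Finset.mul_sum, ← Finset.sum_add_distrib,
      Finset.sum_eq_single 0]
    · simp
    · intro i hi hne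
      have hi1 : 1 ≤ i := by omega
      have hq2 : 2 ≤ q ^ i := le_trans (by omega) (Nat.le_self_pow (by omega) q)
      rw [Polynomial.derivative_C_mul, Polynomial.derivative_X_pow]
      have hcast : ((q ^ i - 1 : ℕ) : RatFunc Fq) = -1 := by
        rw [Nat.cast_sub (by omega), hqiK i hi1, Nat.cast_one, zero_sub]
      rw [hcast]
      have hXpow : Polynomial.X * (Polynomial.X : Polynomial (RatFunc Fq)) ^ (q ^ i - 1 - 1)
          = Polynomial.X ^ (q ^ i - 1) := by
        rw [← pow_succ']
        congr 1
        omega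
      rw [map_neg, map_one]
      linear_combination (-Polynomial.C (a i)) * hXpow
    · intro h; exact absurd (Finset.mem_range.mpr (by omega)) h
  -- splitting field facts
  set R := (G.map φ).roots with hR
  have hsplits : (G.map φ).Splits :=
    Polynomial.SplittingField.splits G
  have hRcard : Multiset.card R = q ^ n - 1 := by
    rw [hR, Polynomial.splits_iff_card_roots.mp hsplits, Polynomial.natDegree_map, hnat]
  have heven : Even (q ^ n - 1) := Nat.Odd.sub_odd hqnodd odd_one
  have hprodR : R.prod = φ (a 0) := by
    have h := hsplits.coeff_zero_eq_prod_roots_of_monic (hmon.map φ)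
    rw [Polynomial.coeff_map, hcoeff0, Polynomial.natDegree_map, hnat,
      heven.neg_one_pow, one_mul] at h
    exact h.symm
  have ha0 : φ (a 0) ≠ 0 := fun h => hc ((map_eq_zero φ).mp h)
  -- each root α satisfies α * G'(α) = φ (a 0)
  have hroot : ∀ α ∈ R, α * Polynomial.eval α ((Polynomial.derivative G).map φ) = φ (a 0) := by
    intro α hα
    have hGα : Polynomial.eval α (G.map φ) = 0 := (Polynomial.mem_roots'.mp hα).2
    have h := congrArg (fun P => Polynomial.eval α (P.map φ)) hkey
    simpa [Polynomial.eval_map, hGα, Polynomial.eval_mul, Polynomial.eval_add] using h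
  -- the product of derivative values
  have hprodf : (R.map (fun α => Polynomial.eval α ((Polynomial.derivative G).map φ))).prod
      = φ (a 0) ^ (q ^ n - 2) := by
    have h1 : (R.map (fun α =>
        α * Polynomial.eval α ((Polynomial.derivative G).map φ))).prod
        = φ (a 0) ^ Multiset.card R := by
      rw [Multiset.map_congr rfl hroot, Multiset.map_const', Multiset.prod_replicate]
    rw [Multiset.prod_map_mul, Multiset.map_id', hprodR, hRcard] at h1
    have h2 : φ (a 0) ^ (q ^ n - 1) = φ (a 0) * φ (a 0) ^ (q ^ n - 2) := by
      rw [← pow_succ']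
      congr 1
      omega
    rw [h2] at h1
    exact mul_left_cancel₀ ha0 h1
  -- putting it together
  refine ⟨a 0 ^ ((q ^ n - 3) / 2), pow_ne_zero _ hc, ?_⟩
  have haroots : G.aroots G.SplittingField = R := rfl
  have haev : ∀ α : G.SplittingField, Polynomial.aeval α (Polynomial.derivative G)
      = Polynomial.eval α ((Polynomial.derivative G).map φ) := by
    intro α
    rw [Polynomial.aeval_def, Polynomial.eval_map]
  unfold polyDisc
  rw [hnat, haroots]
  simp_rw [haev]
  rw [hprodf]
  -- now pure computation in the splitting field
  obtain ⟨k, hk⟩ := hqnodd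
  have hsign : ((-1 : G.SplittingField)) ^ ((q ^ n - 1) * (q ^ n - 1 - 1) / 2)
      = (-1) ^ ((q ^ n - 1) / 2) := by
    have h2k : q ^ n - 1 = 2 * k := by omega
    have hmul : (q ^ n - 1) * (q ^ n - 1 - 1) = 2 * (k * (q ^ n - 2)) := by
      have h3 : q ^ n - 1 - 1 = q ^ n - 2 := by omega
      rw [h3, h2k]; ring
    have he1 : (q ^ n - 1) * (q ^ n - 1 - 1) / 2 = k * (q ^ n - 2) := by
      rw [hmul, Nat.mul_div_cancel_left _ (by norm_num)]
    have he2 : (q ^ n - 1) / 2 = k := by omega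
    have hodd2 : Odd (q ^ n - 2) := ⟨k - 1, by omega⟩
    rw [he1, he2, mul_comm, pow_mul, hodd2.neg_one_pow]
  have hexp : q ^ n - 2 = 1 + (q ^ n - 3) / 2 * 2 := by omega
  rw [hsign, map_mul, map_mul, map_pow, map_pow, map_pow, map_neg, map_one, hexp, pow_add,
    pow_one, pow_mul]
  ring
end

section
/- Let q be a power of 2, let n ≥ 1, and suppose (q, n) ≠ (2, 2). Then every element of GL(n, q), in its natural action on the q^n − 1 nonzero vectors of F_q^n, induces an even permutation of F_q^n \ {0}. -/
open Matrix Equiv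

namespace GLEvenAux

variable {n : ℕ} {Fq : Type} [Field Fq] [Fintype Fq]

/-- The permutation of nonzero vectors induced by an invertible matrix. -/
noncomputable def glPermHom :
    Matrix.GeneralLinearGroup (Fin n) Fq →* Equiv.Perm {v : Fin n → Fq // v ≠ 0} where
  toFun g :=
    { toFun := fun v => ⟨(g : Matrix (Fin n) (Fin n) Fq) *ᵥ (v : Fin n → Fq), by
        intro h0
        have hv : ((g⁻¹ : Matrix.GeneralLinearGroup (Fin n) Fq) : Matrix (Fin n) (Fin n) Fq) *ᵥ
            ((g : Matrix (Fin n) (Fin n) Fq) *ᵥ (v : Fin n → Fq)) = (v : Fin n → Fq) := by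
          rw [mulVec_mulVec, ← Units.val_mul, inv_mul_cancel, Units.val_one, one_mulVec]
        rw [h0, mulVec_zero] at hv
        exact v.2 hv.symm⟩
      invFun := fun v => ⟨((g⁻¹ : Matrix.GeneralLinearGroup (Fin n) Fq) :
          Matrix (Fin n) (Fin n) Fq) *ᵥ (v : Fin n → Fq), by
        intro h0
        have hv : (g : Matrix (Fin n) (Fin n) Fq) *ᵥ
            (((g⁻¹ : Matrix.GeneralLinearGroup (Fin n) Fq) : Matrix (Fin n) (Fin n) Fq) *ᵥ
              (v : Fin n → Fq)) = (v : Fin n → Fq) := by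
          rw [mulVec_mulVec, ← Units.val_mul, mul_inv_cancel, Units.val_one, one_mulVec]
        rw [h0, mulVec_zero] at hv
        exact v.2 hv.symm⟩
      left_inv := fun v => Subtype.ext <| by
        change ((g⁻¹ : Matrix.GeneralLinearGroup (Fin n) Fq) : Matrix (Fin n) (Fin n) Fq) *ᵥ
          ((g : Matrix (Fin n) (Fin n) Fq) *ᵥ (v : Fin n → Fq)) = (v : Fin n → Fq)
        rw [mulVec_mulVec, ← Units.val_mul, inv_mul_cancel, Units.val_one, one_mulVec]
      right_inv := fun v => Subtype.ext <| by
        change (g : Matrix (Fin n) (Fin n) Fq) *ᵥ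
          (((g⁻¹ : Matrix.GeneralLinearGroup (Fin n) Fq) : Matrix (Fin n) (Fin n) Fq) *ᵥ
            (v : Fin n → Fq)) = (v : Fin n → Fq)
        rw [mulVec_mulVec, ← Units.val_mul, mul_inv_cancel, Units.val_one, one_mulVec] }
  map_one' := Equiv.ext fun v => Subtype.ext <| by
    change ((1 : Matrix.GeneralLinearGroup (Fin n) Fq) : Matrix (Fin n) (Fin n) Fq) *ᵥ
      (v : Fin n → Fq) = (v : Fin n → Fq)
    rw [Units.val_one, one_mulVec]
  map_mul' a b := Equiv.ext fun v => Subtype.ext <| by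
    change ((a * b : Matrix.GeneralLinearGroup (Fin n) Fq) : Matrix (Fin n) (Fin n) Fq) *ᵥ
      (v : Fin n → Fq) = (a : Matrix (Fin n) (Fin n) Fq) *ᵥ
        ((b : Matrix (Fin n) (Fin n) Fq) *ᵥ (v : Fin n → Fq))
    rw [Units.val_mul, ← mulVec_mulVec]

/-- The sign of the induced permutation, as a homomorphism. -/
noncomputable def glSign : Matrix.GeneralLinearGroup (Fin n) Fq →* ℤˣ :=
  letI : DecidableEq {v : Fin n → Fq // v ≠ 0} := Classical.decEq _
  letI : Fintype {v : Fin n → Fq // v ≠ 0} := Fintype.ofFinite _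
  Equiv.Perm.sign.comp glPermHom

lemma int_units_eq_one_of_odd_pow {x : ℤˣ} {m : ℕ} (hm : Odd m) (h : x ^ m = 1) : x = 1 := by
  rcases Int.units_eq_one_or x with rfl | rfl
  · rfl
  · rw [hm.neg_one_pow] at h
    exact absurd h (by decide)

/-- A transvection structure as a unit of the matrix ring. -/
def tUnit [Fintype Fq] (t : Matrix.TransvectionStruct (Fin n) Fq) :
    Matrix.GeneralLinearGroup (Fin n) Fq :=
  ⟨t.toMatrix, t.inv.toMatrix, t.mul_inv, t.inv_mul⟩


lemma sign_eq_one_of_sq {α : Type} [DecidableEq α] [Fintype α] (σ : Equiv.Perm α)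
    (hsq : σ * σ = 1) (h4 : 4 ∣ σ.support.card) : Equiv.Perm.sign σ = 1 := by
  have horder : orderOf σ ∣ 2 := orderOf_dvd_of_pow_eq_one (by rw [pow_two]; exact hsq)
  have hall : ∀ x ∈ σ.cycleType, x = 2 := by
    intro x hx
    have hdvd : x ∣ 2 := by
      have := Multiset.dvd_lcm hx
      rw [Equiv.Perm.lcm_cycleType] at this
      exact this.trans horder
    have h2x := Equiv.Perm.two_le_of_mem_cycleType hx
    have := Nat.le_of_dvd (by norm_num) hdvd
    omega
  set k := Multiset.card σ.cycleType with hk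
  have hrep : σ.cycleType = Multiset.replicate k 2 := Multiset.eq_replicate_card.mpr hall
  have hsum : σ.cycleType.sum = 2 * k := by
    rw [hrep, Multiset.sum_replicate, smul_eq_mul, mul_comm]
  have hsupp : σ.support.card = 2 * k := by rw [← σ.sum_cycleType, hsum]
  have hkeven : Even k := by
    rw [hsupp] at h4
    rcases h4 with ⟨m, hm⟩
    exact ⟨m, by omega⟩
  rw [Equiv.Perm.sign_of_cycleType, hsum, ← hk]
  exact Even.neg_one_pow (by rcases hkeven with ⟨m, hm⟩; exact ⟨3 * m, by omega⟩)

lemma glSign_transvection (q : ℕ) [CharP Fq 2]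
    (hq : Fintype.card Fq = q) (e : ℕ) (he : 0 < e) (hqe : q = 2 ^ e)
    (hexc : ¬(q = 2 ∧ n = 2)) (t : Matrix.TransvectionStruct (Fin n) Fq) :
    glSign (tUnit t) = 1 := by
  letI instD : DecidableEq {v : Fin n → Fq // v ≠ 0} := Classical.decEq _
  letI instF : Fintype {v : Fin n → Fq // v ≠ 0} := Fintype.ofFinite _
  classical
  obtain ⟨i, j, hij, c⟩ := t
  -- n ≥ 2
  have hn2 : 2 ≤ n := by
    have : Nontrivial (Fin n) := ⟨i, j, hij⟩
    have := Fintype.one_lt_card (α := Fin n)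
    exact (by simpa using this : 1 < n)
  rcases eq_or_ne c 0 with rfl | hc
  · have h1 : tUnit ⟨i, j, hij, (0 : Fq)⟩ = 1 := by
      ext1
      show Matrix.TransvectionStruct.toMatrix ⟨i, j, hij, (0 : Fq)⟩ = _
      rw [Matrix.TransvectionStruct.toMatrix_mk, Matrix.transvection_zero, Units.val_one]
    rw [h1, _root_.map_one]
  show Equiv.Perm.sign (glPermHom (tUnit ⟨i, j, hij, c⟩)) = 1
  set σ := glPermHom (tUnit ⟨i, j, hij, c⟩) with hσ
  have hTT : tUnit ⟨i, j, hij, c⟩ * tUnit ⟨i, j, hij, c⟩ = 1 := by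
    ext1
    rw [Units.val_mul, Units.val_one]
    show Matrix.TransvectionStruct.toMatrix ⟨i, j, hij, c⟩ *
      Matrix.TransvectionStruct.toMatrix ⟨i, j, hij, c⟩ = 1
    rw [Matrix.TransvectionStruct.toMatrix_mk, Matrix.transvection_mul_transvection_same i j hij c c,
      CharTwo.add_self_eq_zero, Matrix.transvection_zero]
  have hsq : σ * σ = 1 := by rw [hσ, ← _root_.map_mul, hTT, _root_.map_one]
  have hval : ∀ v : {v : Fin n → Fq // v ≠ 0},
      (σ v : Fin n → Fq) = (v : Fin n → Fq) +
        Function.update (0 : Fin n → Fq) i (c * (v : Fin n → Fq) j) := by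
    intro v
    show ((tUnit ⟨i, j, hij, c⟩ : Matrix.GeneralLinearGroup (Fin n) Fq) :
      Matrix (Fin n) (Fin n) Fq) *ᵥ (v : Fin n → Fq) = _
    show Matrix.TransvectionStruct.toMatrix ⟨i, j, hij, c⟩ *ᵥ (v : Fin n → Fq) = _
    rw [Matrix.TransvectionStruct.toMatrix_mk, Matrix.transvection, Matrix.add_mulVec,
      Matrix.one_mulVec, Matrix.single_mulVec]
  have hmem : ∀ v : {v : Fin n → Fq // v ≠ 0}, σ v ≠ v ↔ (v : Fin n → Fq) j ≠ 0 := by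
    intro v
    rw [not_iff_not]
    rw [Subtype.ext_iff, hval v, add_eq_left, Function.update_eq_self_iff]
    simp only [Pi.zero_apply, mul_eq_zero]
    constructor
    · rintro (h | h)
      · exact absurd h hc
      · exact h
    · exact fun h => Or.inr h
  have hsupport : σ.support = Finset.univ.filter
      (fun v : {v : Fin n → Fq // v ≠ 0} => (v : Fin n → Fq) j ≠ 0) := by
    ext v
    simp only [Equiv.Perm.mem_support, Finset.mem_filter, Finset.mem_univ, true_and]
    exact hmem v
  have hcard : σ.support.card =
      Fintype.card {v : {v : Fin n → Fq // v ≠ 0} // (v : Fin n → Fq) j ≠ 0} := by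
    rw [hsupport, Fintype.card_subtype]
  -- the equivalence with a product
  have E : {v : {v : Fin n → Fq // v ≠ 0} // (v : Fin n → Fq) j ≠ 0} ≃
      {x : Fq // x ≠ 0} × ({k : Fin n // k ≠ j} → Fq) := by
    refine Equiv.trans ?_ (Equiv.trans
      ((Equiv.funSplitAt j Fq).subtypeEquiv (fun v => Iff.rfl))
      Equiv.prodSubtypeFstEquivSubtypeProd)
    exact { toFun := fun v => ⟨v.1.1, v.2⟩
            invFun := fun v => ⟨⟨v.1, fun h => v.2 (by rw [h]; rfl)⟩, v.2⟩
            left_inv := fun v => rfl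
            right_inv := fun v => rfl }
  have hcount : σ.support.card = Fintype.card {x : Fq // x ≠ 0} * q ^ (n - 1) := by
    rw [hcard, Fintype.card_congr E, Fintype.card_prod, Fintype.card_fun, hq]
    congr 2
    rw [Fintype.card_subtype_compl, Fintype.card_subtype_eq, Fintype.card_fin]
  -- 4 divides q ^ (n - 1)
  have h4 : 4 ∣ q ^ (n - 1) := by
    rw [hqe, ← pow_mul]
    have h2 : 2 ≤ e * (n - 1) := by
      rcases Nat.lt_or_ge e 2 with h | h
      · have he1 : e = 1 := by omega
        have hne : n ≠ 2 := fun hn => hexc ⟨by rw [hqe, he1]; norm_num, hn⟩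
        rw [he1, one_mul]
        omega
      · calc 2 = 2 * 1 := by norm_num
        _ ≤ e * (n - 1) := Nat.mul_le_mul h (by omega)
    calc (4 : ℕ) = 2 ^ 2 := by norm_num
    _ ∣ 2 ^ (e * (n - 1)) := pow_dvd_pow 2 h2
  exact sign_eq_one_of_sq σ hsq (by rw [hcount]; exact Dvd.dvd.mul_left h4 _)

end GLEvenAux

open GLEvenAux

/-- Let `q` be a power of `2`, `n ≥ 1`, and `(q, n) ≠ (2, 2)`. Then every
element of `GL(n, q)`, in its natural action on the `qⁿ − 1` nonzero vectors of `F_qⁿ`,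
induces an even permutation of `F_qⁿ \\ {0}`. -/
theorem GL_even_on_nonzero_vectors_char_two
    (q n : ℕ) (Fq : Type) [Field Fq] [Fintype Fq] (hq : Fintype.card Fq = q)
    (h2 : ∃ e : ℕ, 0 < e ∧ q = 2 ^ e) (hn : 1 ≤ n)
    (hexc : ¬(q = 2 ∧ n = 2))
    (g : Matrix.GeneralLinearGroup (Fin n) Fq) :
    haveI : DecidableEq {v : Fin n → Fq // v ≠ 0} := Classical.decEq _
    haveI : Fintype {v : Fin n → Fq // v ≠ 0} := Fintype.ofFinite _
    ∃ π : Equiv.Perm {v : Fin n → Fq // v ≠ 0},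
      (∀ v : {v : Fin n → Fq // v ≠ 0},
        (π v : Fin n → Fq) = Matrix.mulVec (g : Matrix (Fin n) (Fin n) Fq) (v : Fin n → Fq)) ∧
      Equiv.Perm.sign π = 1 := by
  classical
  obtain ⟨e, he, hqe⟩ := h2
  -- characteristic 2
  haveI hchar2 : CharP Fq 2 := by
    obtain ⟨p, hp⟩ := CharP.exists Fq
    haveI := hp
    obtain ⟨k, hpprime, hcard⟩ := FiniteField.card Fq p
    have hp2 : p = 2 := by
      have hdvd : p ∣ 2 ^ e := by
        rw [← hqe, ← hq, hcard]
        exact dvd_pow_self p k.pos.ne'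
      exact (Nat.prime_dvd_prime_iff_eq hpprime Nat.prime_two).mp
        (Nat.Prime.dvd_of_dvd_pow hpprime hdvd)
    rwa [hp2] at hp
  have hq2 : (2 : Fq) = 0 := by
    have := hchar2.cast_eq_zero
    exact_mod_cast this
  -- q - 1 odd
  have hqodd : Odd (q - 1) := by
    have hm : q = 2 * 2 ^ (e - 1) := by
      rw [hqe, ← pow_succ']
      congr 1
      omega
    have h1 : 1 ≤ 2 ^ (e - 1) := Nat.one_le_two_pow
    exact ⟨2 ^ (e - 1) - 1, by omega⟩
  -- sign of a transvection unit is 1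
  have htrans : ∀ t : Matrix.TransvectionStruct (Fin n) Fq, glSign (tUnit t) = 1 :=
    fun t => glSign_transvection q hq e he hqe hexc t
  -- sign of diagonal units
  have hdiag : ∀ (d : Matrix.GeneralLinearGroup (Fin n) Fq) (D : Fin n → Fq),
      (d : Matrix (Fin n) (Fin n) Fq) = Matrix.diagonal D → glSign d = 1 := by
    intro d D hD
    have hDne : ∀ i, D i ≠ 0 := by
      intro i hi
      have hdet : IsUnit (Matrix.diagonal D).det := (hD ▸ d.isUnit).map Matrix.detMonoidHom
      rw [Matrix.det_diagonal] at hdet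
      have := hdet.ne_zero
      exact this (Finset.prod_eq_zero (Finset.mem_univ i) hi)
    have hpow : d ^ (q - 1) = 1 := by
      ext1
      have hDk : D ^ (q - 1) = (fun _ => 1 : Fin n → Fq) := funext fun i => by
        rw [Pi.pow_apply, ← hq]
        exact FiniteField.pow_card_sub_one_eq_one (D i) (hDne i)
      rw [Units.val_pow_eq_pow_val, hD, Units.val_one, Matrix.diagonal_pow, hDk,
        Matrix.diagonal_one]
    have : glSign d ^ (q - 1) = 1 := by
      rw [← map_pow, hpow, _root_.map_one]
    exact int_units_eq_one_of_odd_pow hqodd this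
  -- decomposition
  obtain ⟨L, L', D, hdecomp⟩ :=
    Matrix.Pivot.exists_list_transvec_mul_diagonal_mul_list_transvec
      (g : Matrix (Fin n) (Fin n) Fq)
  set uL : Matrix.GeneralLinearGroup (Fin n) Fq := (L.map tUnit).prod with huL
  set uL' : Matrix.GeneralLinearGroup (Fin n) Fq := (L'.map tUnit).prod with huL'
  have hcoeL : (uL : Matrix (Fin n) (Fin n) Fq) = (L.map Matrix.TransvectionStruct.toMatrix).prod := by
    rw [huL, ← Units.coeHom_apply, map_list_prod, List.map_map]
    rfl
  have hcoeL' : (uL' : Matrix (Fin n) (Fin n) Fq) = (L'.map Matrix.TransvectionStruct.toMatrix).prod := by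
    rw [huL', ← Units.coeHom_apply, map_list_prod, List.map_map]
    rfl
  set d : Matrix.GeneralLinearGroup (Fin n) Fq := uL⁻¹ * g * uL'⁻¹ with hd
  have hgLdL : g = uL * d * uL' := by
    rw [hd]; group
  have hdcoe : (d : Matrix (Fin n) (Fin n) Fq) = Matrix.diagonal D := by
    have h2 : (uL : Matrix (Fin n) (Fin n) Fq) * ((d : Matrix (Fin n) (Fin n) Fq) *
        (uL' : Matrix (Fin n) (Fin n) Fq)) = (uL : Matrix (Fin n) (Fin n) Fq) *
        (Matrix.diagonal D * (uL' : Matrix (Fin n) (Fin n) Fq)) := by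
      rw [← mul_assoc, ← mul_assoc, ← Units.val_mul, ← Units.val_mul, ← hgLdL, hdecomp,
        hcoeL, hcoeL']
    have h3 := (Units.mul_right_inj uL).mp h2
    exact (Units.mul_left_inj uL').mp h3
  have hsign : glSign g = 1 := by
    have hLsign : ∀ (M : List (Matrix.TransvectionStruct (Fin n) Fq)),
        glSign ((M.map tUnit).prod) = 1 := by
      intro M
      induction M with
      | nil => simp
      | cons t M ih =>
        rw [List.map_cons, List.prod_cons, _root_.map_mul, htrans, ih, one_mul]
    rw [hgLdL, _root_.map_mul, _root_.map_mul, hLsign, hLsign, hdiag d D hdcoe]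
    simp
  refine ⟨glPermHom g, fun v => rfl, hsign⟩
end

section
/- Let q be a prime power, n ≥ 1, and let L(x) ∈ F_q[x] be a monic q-linearized polynomial of q-degree n. Then the polynomial (L(x) + t·x)/x = L(x)/x + t, of degree q^n − 1, is irreducible over the rational function field F_q(t). Consequently, q^n − 1 divides the order of the Galois group of L(x) + t·x over F_q(t). -/
open Polynomial
open scoped IntermediateField

noncomputable def polySwap (R : Type*) [CommRing R] : R[X][X] →+* R[X][X] :=
  eval₂RingHom (eval₂RingHom ((C : R[X] →+* R[X][X]).comp (C : R →+* R[X])) X) (C X)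

@[simp] lemma polySwap_X (R : Type*) [CommRing R] : polySwap R X = C X := by
  simp [polySwap]

@[simp] lemma polySwap_C (R : Type*) [CommRing R] (p : R[X]) :
    polySwap R (C p) = p.map C := by
  simp only [polySwap, coe_eval₂RingHom, eval₂_C]
  rfl

lemma polySwap_polySwap (R : Type*) [CommRing R] (p : R[X][X]) :
    polySwap R (polySwap R p) = p := by
  have h : (polySwap R).comp (polySwap R) = RingHom.id _ := by
    apply Polynomial.ringHom_ext'
    · apply Polynomial.ringHom_ext
      · intro a
        simp [Polynomial.map_C]
      · simp
    · simp
  exact RingHom.congr_fun h p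

noncomputable def polySwapEquiv (R : Type*) [CommRing R] : R[X][X] ≃+* R[X][X] :=
  { toFun := polySwap R
    invFun := polySwap R
    left_inv := polySwap_polySwap R
    right_inv := polySwap_polySwap R
    map_mul' := map_mul _
    map_add' := map_add _ }

lemma natDegree_dvd_card_gal {F : Type*} [Field F] {p : F[X]}
    (p_irr : Irreducible p) (p_sep : p.Separable) :
    p.natDegree ∣ Fintype.card p.Gal := by
  rw [← Nat.card_eq_fintype_card, Polynomial.Gal.card_of_separable p_sep]
  have hp : p.degree ≠ 0 := by
    intro h
    exact p_irr.natDegree_pos.ne'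
      (natDegree_eq_zero_iff_degree_le_zero.mpr (le_of_eq h))
  let α : p.SplittingField :=
    rootOfSplits (SplittingField.splits p) (by rwa [degree_map])
  have hα : IsIntegral F α := .of_finite F α
  use Module.finrank F⟮α⟯ p.SplittingField
  suffices hmd : (minpoly F α).natDegree = p.natDegree by
    letI : AddCommGroup F⟮α⟯ := Ring.toAddCommGroup
    rw [← Module.finrank_mul_finrank F F⟮α⟯ p.SplittingField,
      IntermediateField.adjoin.finrank hα, hmd]
  suffices minpoly F α ∣ p by
    have key := (minpoly.irreducible hα).dvd_symm p_irr this
    apply le_antisymm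
    · exact natDegree_le_of_dvd this p_irr.ne_zero
    · exact natDegree_le_of_dvd key (minpoly.ne_zero hα)
  apply minpoly.dvd F α
  rw [aeval_def, ← eval_map, eval_rootOfSplits]

/-- Let `q` be a prime power, `n ≥ 1`, and `L(x) ∈ F_q[x]` a monic
`q`-linearized polynomial of `q`-degree `n`. Then `(L(x) + t·x)/x = L(x)/x + t`, a
polynomial of degree `qⁿ − 1`, is irreducible over `F_q(t)`; consequently `qⁿ − 1`
divides the order of the Galois group of `L(x) + t·x` over `F_q(t)`. -/
theorem linearized_div_X_add_t_irreducible
    (q n : ℕ) (Fq : Type) [Field Fq] [Fintype Fq] (hq : Fintype.card Fq = q)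
    (hn : 1 ≤ n)
    (a : ℕ → Fq) (L G : Polynomial Fq)
    (hL : L = ∑ i ∈ Finset.range (n + 1), Polynomial.C (a i) * Polynomial.X ^ q ^ i)
    (hG : G = ∑ i ∈ Finset.range (n + 1), Polynomial.C (a i) * Polynomial.X ^ (q ^ i - 1))
    (hmonic : a n = 1) :
    Irreducible (G.map (algebraMap Fq (RatFunc Fq)) + Polynomial.C (RatFunc.X : RatFunc Fq)) ∧
    (q ^ n - 1) ∣
      Nat.card (L.map (algebraMap Fq (RatFunc Fq)) +
        Polynomial.C (RatFunc.X : RatFunc Fq) * Polynomial.X).Gal := by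
  have hq2 : 2 ≤ q := hq ▸ Fintype.one_lt_card
  have hqn : 2 ≤ q ^ n := le_trans hq2 (Nat.le_self_pow (by omega) q)
  -- the coefficient of `G` at `q ^ n - 1` is `1`
  have hcoeff : G.coeff (q ^ n - 1) = 1 := by
    rw [hG, finset_sum_coeff]
    rw [Finset.sum_eq_single n]
    · simp [hmonic]
    · intro i hi hin
      have hlt : q ^ i < q ^ n :=
        Nat.pow_lt_pow_right (by omega) (by
          rcases lt_or_eq_of_le (Nat.lt_succ_iff.mp (Finset.mem_range.mp hi)) with h | h
          · exact h
          · exact absurd h hin)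
      have hne : q ^ i - 1 ≠ q ^ n - 1 := by omega
      simp [coeff_C_mul, coeff_X_pow, if_neg (Ne.symm hne)]
    · intro h
      exact absurd (Finset.self_mem_range_succ n) h
  have hdegle : G.natDegree ≤ q ^ n - 1 := by
    rw [hG]
    apply Polynomial.natDegree_sum_le_of_forall_le
    intro i hi
    refine le_trans (natDegree_C_mul_le _ _) ?_
    rw [natDegree_X_pow]
    have : q ^ i ≤ q ^ n := Nat.pow_le_pow_right (by omega)
      (Nat.lt_succ_iff.mp (Finset.mem_range.mp hi))
    omega
  have hGmonic : G.Monic := monic_of_natDegree_le_of_coeff_eq_one _ hdegle hcoeff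
  have hGdeg : G.natDegree = q ^ n - 1 :=
    le_antisymm hdegle (le_natDegree_of_ne_zero (by rw [hcoeff]; exact one_ne_zero))
  -- `L = X * G`
  have hLG : L = X * G := by
    rw [hL, hG, Finset.mul_sum]
    refine Finset.sum_congr rfl fun i _ => ?_
    have h1 : 1 ≤ q ^ i := Nat.one_le_pow _ _ (by omega)
    rw [mul_left_comm, ← pow_succ', Nat.sub_add_cancel h1]
  -- the bivariate polynomial `P` over `Fq[t]`
  set P : Polynomial (Polynomial Fq) := G.map (C : Fq →+* Polynomial Fq) + C X with hP
  have hmapmonic : (G.map (C : Fq →+* Polynomial Fq)).Monic := hGmonic.map _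
  have hPmonic : P.Monic := by
    apply hmapmonic.add_of_left
    apply lt_of_le_of_lt (degree_C_le)
    rw [degree_eq_natDegree hmapmonic.ne_zero, hGmonic.natDegree_map, hGdeg]
    exact_mod_cast Nat.sub_pos_of_lt (by omega)
  have hPirr : Irreducible P := by
    have h1 : Irreducible (X + C G : Polynomial (Polynomial Fq)) :=
      (monic_X_add_C G).irreducible_of_degree_eq_one (degree_X_add_C G)
    have h2 : polySwapEquiv Fq (X + C G) = P := by
      show polySwap Fq (X + C G) = P
      rw [map_add, polySwap_X, polySwap_C, hP, add_comm]
    have h3 := (MulEquiv.irreducible_iff (polySwapEquiv Fq)).mpr h1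
    rwa [h2] at h3
  -- transfer to `RatFunc Fq` via Gauss's lemma
  have hcomp : (algebraMap (Polynomial Fq) (RatFunc Fq)).comp (C : Fq →+* Polynomial Fq)
      = algebraMap Fq (RatFunc Fq) := by
    rw [← Polynomial.algebraMap_eq, ← IsScalarTower.algebraMap_eq]
  have hmapeq : P.map (algebraMap (Polynomial Fq) (RatFunc Fq))
      = G.map (algebraMap Fq (RatFunc Fq)) + C (RatFunc.X : RatFunc Fq) := by
    rw [hP, Polynomial.map_add, Polynomial.map_map, hcomp, Polynomial.map_C,
      RatFunc.algebraMap_X]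
  have hPirr' : Irreducible (G.map (algebraMap Fq (RatFunc Fq)) +
      C (RatFunc.X : RatFunc Fq)) := by
    rw [← hmapeq]
    exact (hPmonic.irreducible_iff_irreducible_map_fraction_map).mp hPirr
  refine ⟨hPirr', ?_⟩
  -- separability
  set P' : Polynomial (RatFunc Fq) :=
    G.map (algebraMap Fq (RatFunc Fq)) + C (RatFunc.X : RatFunc Fq) with hP'
  have hGder : derivative G ≠ 0 := by
    intro h
    have h0 := coeff_derivative G (q ^ n - 2)
    have he : q ^ n - 2 + 1 = q ^ n - 1 := by omega
    rw [h, coeff_zero, he, hcoeff, one_mul] at h0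
    have hcast : ((q ^ n - 2 : ℕ) : Fq) + 1 = -1 := by
      have h1 : ((q : ℕ) : Fq) = 0 := by
        rw [← hq]; exact FiniteField.cast_card_eq_zero Fq
      rw [Nat.cast_sub (by omega : 2 ≤ q ^ n), Nat.cast_pow, h1, zero_pow (by omega)]
      push_cast
      ring
    rw [hcast] at h0
    exact (neg_ne_zero.mpr one_ne_zero) h0.symm
  have hP'der : derivative P' ≠ 0 := by
    rw [hP', derivative_add, derivative_C, add_zero, derivative_map]
    exact Polynomial.map_ne_zero hGder
  have hsep : P'.Separable := (separable_iff_derivative_ne_zero hPirr').mpr hP'der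
  have hP'deg : P'.natDegree = q ^ n - 1 := by
    rw [hP', natDegree_add_C, hGmonic.natDegree_map, hGdeg]
  -- degree divides card of Galois group of `P'`
  have hd1 : (q ^ n - 1) ∣ Nat.card P'.Gal := by
    rw [Nat.card_eq_fintype_card, ← hP'deg]
    exact natDegree_dvd_card_gal hPirr' hsep
  -- the full polynomial is `P' * X`
  have hMeq : L.map (algebraMap Fq (RatFunc Fq)) + C (RatFunc.X : RatFunc Fq) * X
      = P' * X := by
    rw [hLG, Polynomial.map_mul, Polynomial.map_X, hP']
    ring
  have hM0 : P' * X ≠ 0 := mul_ne_zero hPirr'.ne_zero X_ne_zero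
  have hsurj := Polynomial.Gal.restrictDvd_surjective (dvd_mul_right P' X) hM0
  have hd2 : Nat.card P'.Gal ∣ Nat.card (P' * X).Gal :=
    Subgroup.card_dvd_of_surjective _ hsurj
  rw [hMeq]
  exact dvd_trans hd1 hd2
end
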